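/- arXiv:2004.00858 — 9 statements merged into one kernel-verified Lean document; each statement's English description precedes it below -/
import Mathlib

section
/- For every fixed s ≥ 0, the function μ ↦ θ(s,μ) is continuously differentiable on (0,+∞) with derivative ∂θ/∂μ(s,μ) = −3s/(2μ²) if μ > 3s, ∂θ/∂μ(s,μ) = −9(μ−s)s/(4μ³) if s ≤ μ ≤ 3s, and ∂θ/∂μ(s,μ) = 0 if μ < s; moreover μ ↦ ∂θ/∂μ(s,μ) is locally Lipschitz continuous on (0,+∞). Consequently, for every fixed x ∈ ℝⁿ with x ≥ 0, Θ(x,·) is continuously differentiable on (0,+∞) and its derivative ∂Θ/∂μ(x,·) is locally Lipschitz continuous on (0,+∞). -/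
open Filter Set
open scoped NNReal

/-- The spare-smoothing kernel θ(s,μ). -/
noncomputable def phi (s μ : ℝ) : ℝ :=
  if s < μ / 3 then 3 / (2 * μ) * s
  else if s ≤ μ then -(9 / (8 * μ ^ 2)) * (s - μ) ^ 2 + 1
  else 1

/-- ∂θ/∂s(s,μ). -/
noncomputable def phiS (s μ : ℝ) : ℝ :=
  if s < μ / 3 then 3 / (2 * μ)
  else if s ≤ μ then 9 / (4 * μ ^ 2) * (μ - s)
  else 0

/-- ∂θ/∂μ(s,μ) (for s ≥ 0). -/
noncomputable def phiM (s μ : ℝ) : ℝ :=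
  if 3 * s < μ then -(3 * s) / (2 * μ ^ 2)
  else if s ≤ μ then -(9 * (μ - s) * s) / (4 * μ ^ 3)
  else 0

/-- Θ(x,μ) = Σ_i θ(x_i,μ). -/
noncomputable def Phi {n : ℕ} (x : EuclideanSpace ℝ (Fin n)) (μ : ℝ) : ℝ :=
  ∑ i, phi (x i) μ

/-- ∇ₓΘ(x,μ), the gradient of Θ(·,μ). -/
noncomputable def gradPhi {n : ℕ} (x : EuclideanSpace ℝ (Fin n)) (μ : ℝ) :
    EuclideanSpace ℝ (Fin n) := WithLp.toLp 2 (fun i => phiS (x i) μ)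

/-- ‖x‖₀, the number of nonzero entries of x. -/
noncomputable def norm0 {n : ℕ} (x : EuclideanSpace ℝ (Fin n)) : ℕ :=
  Nat.card {i // x i ≠ 0}

/-- μ(t) = (α₀/(t+1)^β + μ*)/2. -/
noncomputable def muFun (α₀ β μs t : ℝ) : ℝ := (α₀ / (t + 1) ^ β + μs) / 2

noncomputable def F1 (s μ : ℝ) : ℝ := -(3 * s) / (2 * μ ^ 2)
noncomputable def F2 (s μ : ℝ) : ℝ := -(9 * (μ - s) * s) / (4 * μ ^ 3)

lemma hasDeriv_f (s : ℝ) {μ : ℝ} (hμ : μ ≠ 0) :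
    HasDerivAt (fun μ' => 3 / (2 * μ') * s) (F1 s μ) μ := by
  have h := (hasDerivAt_inv hμ).const_mul (3 * s / 2)
  have hfun : (fun μ' : ℝ => 3 / (2 * μ') * s) = fun μ' => 3 * s / 2 * μ'⁻¹ := by
    funext μ'; ring
  rw [hfun]
  refine h.congr_deriv ?_
  rw [F1]; field_simp

lemma hasDeriv_g (s : ℝ) {μ : ℝ} (hμ : μ ≠ 0) :
    HasDerivAt (fun μ' => -(9 / (8 * μ' ^ 2)) * (s - μ') ^ 2 + 1) (F2 s μ) μ := by
  have h1 : HasDerivAt (fun μ' : ℝ => (s - μ') ^ 2) ((2 : ℕ) * (s - μ) ^ 1 * (-1)) μ :=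
    ((hasDerivAt_id μ).const_sub s).pow 2
  have h2 : HasDerivAt (fun μ' : ℝ => μ' ^ 2) ((2 : ℕ) * μ ^ 1) μ := hasDerivAt_pow 2 μ
  have h3 := h1.div h2 (pow_ne_zero 2 hμ)
  have h4 := (h3.const_mul (-(9 / 8 : ℝ))).add_const 1
  have hfun : (fun μ' : ℝ => -(9 / (8 * μ' ^ 2)) * (s - μ') ^ 2 + 1)
      = fun μ' => -(9 / 8 : ℝ) * ((s - μ') ^ 2 / μ' ^ 2) + 1 := by
    funext μ'; ring
  rw [hfun]
  refine h4.congr_deriv ?_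
  rw [F2]; field_simp; ring

lemma phiM_val1 (s : ℝ) {μ : ℝ} (h : 3 * s < μ) : phiM s μ = F1 s μ := by
  rw [phiM, if_pos h, F1]

lemma phiM_val2 (s : ℝ) {μ : ℝ} (h1 : ¬ 3 * s < μ) (h2 : s ≤ μ) : phiM s μ = F2 s μ := by
  rw [phiM, if_neg h1, if_pos h2, F2]

lemma phiM_val3 (s : ℝ) {μ : ℝ} (h1 : ¬ 3 * s < μ) (h2 : ¬ s ≤ μ) : phiM s μ = 0 := by
  rw [phiM, if_neg h1, if_neg h2]

lemma phi_eq_f {s μ : ℝ} (h : 3 * s < μ) : phi s μ = 3 / (2 * μ) * s := by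
  rw [phi, if_pos (by linarith)]

lemma phi_eq_g {s μ : ℝ} (h1 : μ ≤ 3 * s) (h2 : s ≤ μ) :
    phi s μ = -(9 / (8 * μ ^ 2)) * (s - μ) ^ 2 + 1 := by
  rw [phi, if_neg (by linarith), if_pos h2]

lemma phi_eq_one {s μ : ℝ} (hs : 0 ≤ s) (h : μ < s) : phi s μ = 1 := by
  rw [phi, if_neg (by linarith), if_neg (by linarith)]

lemma scalar_deriv (s : ℝ) (hs : 0 ≤ s) {μ : ℝ} (hμ : 0 < μ) :
    HasDerivAt (fun μ' => phi s μ') (phiM s μ) μ := by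
  rcases lt_trichotomy μ s with h1 | h1 | h1
  · -- μ < s : phi = 1 near μ
    have hev : (fun μ' => phi s μ') =ᶠ[nhds μ] fun _ => 1 :=
      eventually_of_mem (Iio_mem_nhds h1) (fun μ' hμ' => phi_eq_one hs hμ')
    rw [phiM_val3 s (by linarith) (by linarith)]
    exact (hasDerivAt_const μ 1).congr_of_eventuallyEq hev
  · -- μ = s, s > 0
    have hs' : 0 < s := h1 ▸ hμ
    rw [phiM_val2 s (by linarith) h1.ge]
    have hF20 : F2 s μ = 0 := by rw [F2, h1]; simp
    have hpt : phi s μ = 1 := by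
      rw [phi_eq_g (by linarith) h1.ge, h1]; simp
    have hleft : HasDerivWithinAt (fun μ' => phi s μ') (F2 s μ) (Iic μ) μ := by
      rw [hF20]
      refine ((hasDerivAt_const μ (1:ℝ)).hasDerivWithinAt).congr (fun y hy => ?_) hpt
      rcases eq_or_lt_of_le (mem_Iic.mp hy) with h | h
      · subst h; exact hpt
      · exact phi_eq_one hs (by linarith)
    have hright : HasDerivWithinAt (fun μ' => phi s μ') (F2 s μ) (Ici μ ∩ Iic (3 * s)) μ := by
      refine ((hasDeriv_g s hμ.ne').hasDerivWithinAt).congr (fun y hy => ?_) ?_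
      · exact phi_eq_g hy.2 (by have := hy.1; simp only [mem_Ici] at this; linarith)
      · exact phi_eq_g (by linarith) h1.ge
    have hunion : HasDerivWithinAt (fun μ' => phi s μ') (F2 s μ) (Iic μ ∪ Ici μ ∩ Iic (3 * s)) μ :=
      HasFDerivWithinAt.union hleft hright
    refine hunion.hasDerivAt ?_
    refine mem_of_superset (Iio_mem_nhds (by linarith : μ < 3 * s)) ?_
    intro y hy
    rcases le_total y μ with h | h
    · exact Or.inl h
    · exact Or.inr ⟨mem_Ici.mpr h, mem_Iic.mpr (le_of_lt (mem_Iio.mp hy))⟩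
  · -- s < μ
    rcases lt_trichotomy μ (3 * s) with h2 | h2 | h2
    · -- s < μ < 3s
      rw [phiM_val2 s (by linarith) h1.le]
      refine (hasDeriv_g s hμ.ne').congr_of_eventuallyEq ?_
      refine eventually_of_mem (Ioo_mem_nhds h1 h2) (fun y hy => ?_)
      exact phi_eq_g hy.2.le hy.1.le
    · -- μ = 3s
      have hs' : 0 < s := by linarith
      rw [phiM_val2 s (by linarith) h1.le]
      have hpt : phi s μ = 3 / (2 * μ) * s := by
        rw [phi_eq_g h2.le h1.le, h2]
        have h3 : (s:ℝ) ≠ 0 := hs'.ne'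
        field_simp
        ring
      have hleft : HasDerivWithinAt (fun μ' => phi s μ') (F2 s μ) (Ici s ∩ Iic μ) μ := by
        refine ((hasDeriv_g s hμ.ne').hasDerivWithinAt).congr (fun y hy => ?_) ?_
        · exact phi_eq_g (by have := hy.2; simp only [mem_Iic] at this; linarith) hy.1
        · exact phi_eq_g h2.le h1.le
      have hright : HasDerivWithinAt (fun μ' => phi s μ') (F2 s μ) (Ici μ) μ := by
        have hF : F2 s μ = F1 s μ := by
          rw [F1, F2, h2, div_eq_div_iff (by positivity) (by positivity)]; ring
        rw [hF]
        refine ((hasDeriv_f s hμ.ne').hasDerivWithinAt).congr (fun y hy => ?_) hpt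
        rcases (eq_or_lt_of_le (mem_Ici.mp hy)).symm.imp id Eq.symm with h | h
        swap
        · subst h; exact hpt
        · exact phi_eq_f (by linarith)
      have hunion : HasDerivWithinAt (fun μ' => phi s μ') (F2 s μ) (Ici s ∩ Iic μ ∪ Ici μ) μ :=
        HasFDerivWithinAt.union hleft hright
      refine hunion.hasDerivAt ?_
      refine mem_of_superset (Ioi_mem_nhds (h1 : s < μ)) ?_
      intro y hy
      rcases le_total y μ with h | h
      · exact Or.inl ⟨mem_Ici.mpr (le_of_lt (mem_Ioi.mp hy)), mem_Iic.mpr h⟩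
      · exact Or.inr h
    · -- 3s < μ
      rw [phiM_val1 s h2]
      refine (hasDeriv_f s hμ.ne').congr_of_eventuallyEq ?_
      refine eventually_of_mem (Ioi_mem_nhds h2) (fun y hy => ?_)
      exact phi_eq_f hy

lemma phiM_eq_maxmin (s : ℝ) (hs : 0 ≤ s) {μ : ℝ} (hμ : 0 < μ) :
    phiM s μ = max (F1 s μ) (min (F2 s μ) 0) := by
  rw [phiM, F1, F2]
  split_ifs with h1 h2
  · have hF2le0 : -(9 * (μ - s) * s) / (4 * μ ^ 3) ≤ 0 := by
      apply div_nonpos_of_nonpos_of_nonneg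
      · nlinarith
      · positivity
    have hle : -(9 * (μ - s) * s) / (4 * μ ^ 3) ≤ -(3 * s) / (2 * μ ^ 2) := by
      rw [div_le_div_iff₀ (by positivity) (by positivity)]
      nlinarith [mul_nonneg (mul_nonneg hs (by linarith : (0:ℝ) ≤ μ - 3 * s)) (sq_nonneg μ)]
    rw [min_eq_left hF2le0, max_eq_left hle]
  · have hF2le0 : -(9 * (μ - s) * s) / (4 * μ ^ 3) ≤ 0 := by
      apply div_nonpos_of_nonpos_of_nonneg
      · nlinarith
      · positivity
    have hle : -(3 * s) / (2 * μ ^ 2) ≤ -(9 * (μ - s) * s) / (4 * μ ^ 3) := by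
      rw [div_le_div_iff₀ (by positivity) (by positivity)]
      nlinarith [mul_nonneg (mul_nonneg hs (by linarith : (0:ℝ) ≤ 3 * s - μ)) (sq_nonneg μ)]
    rw [min_eq_left hF2le0, max_eq_right hle]
  · have hF2ge0 : (0:ℝ) ≤ -(9 * (μ - s) * s) / (4 * μ ^ 3) := by
      apply div_nonneg
      · nlinarith
      · positivity
    have hF1le0 : -(3 * s) / (2 * μ ^ 2) ≤ 0 := by
      apply div_nonpos_of_nonpos_of_nonneg
      · nlinarith
      · positivity
    rw [min_eq_right hF2ge0, max_eq_right hF1le0]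

lemma cont_F1 (s : ℝ) : ContinuousOn (F1 s) (Ioi 0) := by
  apply ContinuousOn.div continuousOn_const (by fun_prop)
  intro μ hμ
  have : (0:ℝ) < μ := hμ
  positivity

lemma cont_F2 (s : ℝ) : ContinuousOn (F2 s) (Ioi 0) := by
  apply ContinuousOn.div (by fun_prop) (by fun_prop)
  intro μ hμ
  have : (0:ℝ) < μ := hμ
  positivity

lemma cont_phiM (s : ℝ) (hs : 0 ≤ s) : ContinuousOn (fun μ => phiM s μ) (Ioi 0) := by
  have h : ContinuousOn (fun μ => max (F1 s μ) (min (F2 s μ) 0)) (Ioi 0) :=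
    (cont_F1 s).sup ((cont_F2 s).inf (continuousOn_const (c := (0:ℝ))))
  refine h.congr fun μ hμ => phiM_eq_maxmin s hs (mem_Ioi.mp hμ)

lemma lip_max {K1 K2 : ℝ≥0} {f g : ℝ → ℝ} {U : Set ℝ} (hf : LipschitzOnWith K1 f U)
    (hg : LipschitzOnWith K2 g U) :
    LipschitzOnWith (max K1 K2) (fun x => max (f x) (g x)) U := by
  rw [lipschitzOnWith_iff_dist_le_mul] at hf hg ⊢
  intro x hx y hy
  have h1 := hf x hx y hy
  have h2 := hg x hx y hy
  rw [Real.dist_eq] at h1 h2 ⊢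
  refine (abs_max_sub_max_le_max _ _ _ _).trans (max_le ?_ ?_)
  · exact h1.trans (mul_le_mul_of_nonneg_right (by exact_mod_cast le_max_left K1 K2) dist_nonneg)
  · exact h2.trans (mul_le_mul_of_nonneg_right (by exact_mod_cast le_max_right K1 K2) dist_nonneg)

lemma lip_min {K1 K2 : ℝ≥0} {f g : ℝ → ℝ} {U : Set ℝ} (hf : LipschitzOnWith K1 f U)
    (hg : LipschitzOnWith K2 g U) :
    LipschitzOnWith (max K1 K2) (fun x => min (f x) (g x)) U := by
  rw [lipschitzOnWith_iff_dist_le_mul] at hf hg ⊢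
  intro x hx y hy
  have h1 := hf x hx y hy
  have h2 := hg x hx y hy
  rw [Real.dist_eq] at h1 h2 ⊢
  refine (abs_min_sub_min_le_max _ _ _ _).trans (max_le ?_ ?_)
  · exact h1.trans (mul_le_mul_of_nonneg_right (by exact_mod_cast le_max_left K1 K2) dist_nonneg)
  · exact h2.trans (mul_le_mul_of_nonneg_right (by exact_mod_cast le_max_right K1 K2) dist_nonneg)

lemma lip_phiM (s : ℝ) (hs : 0 ≤ s) {μ₀ : ℝ} (hμ₀ : μ₀ ∈ Ioi (0:ℝ)) :
    ∃ K : ℝ≥0, ∃ U ∈ nhdsWithin μ₀ (Ioi (0 : ℝ)), LipschitzOnWith K (fun μ => phiM s μ) U := by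
  have hμ0 : (0:ℝ) < μ₀ := hμ₀
  have d1 : ContDiffAt ℝ 1 (F1 s) μ₀ := by
    apply ContDiffAt.div contDiffAt_const (by fun_prop)
    positivity
  have d2 : ContDiffAt ℝ 1 (F2 s) μ₀ := by
    apply ContDiffAt.div (by fun_prop) (by fun_prop)
    positivity
  obtain ⟨K1, t1, ht1, l1⟩ := d1.exists_lipschitzOnWith
  obtain ⟨K2, t2, ht2, l2⟩ := d2.exists_lipschitzOnWith
  refine ⟨max K1 (max K2 0), t1 ∩ t2 ∩ Ioi 0, ?_, ?_⟩
  · exact inter_mem (inter_mem (mem_nhdsWithin_of_mem_nhds ht1)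
      (mem_nhdsWithin_of_mem_nhds ht2)) self_mem_nhdsWithin
  · have lmax : LipschitzOnWith (max K1 (max K2 0))
        (fun μ => max (F1 s μ) (min (F2 s μ) 0)) (t1 ∩ t2 ∩ Ioi 0) := by
      refine lip_max (l1.mono ?_) (lip_min (l2.mono ?_)
        ((LipschitzWith.const (0:ℝ)).lipschitzOnWith))
      · exact fun y hy => hy.1.1
      · exact fun y hy => hy.1.2
    rw [lipschitzOnWith_iff_dist_le_mul] at lmax ⊢
    intro x hx y hy
    have ex := phiM_eq_maxmin s hs (mem_Ioi.mp hx.2)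
    have ey := phiM_eq_maxmin s hs (mem_Ioi.mp hy.2)
    rw [ex, ey]
    exact lmax x hx y hy

lemma lip_sum {ι : Type*} (t : Finset ι) (K : ι → ℝ≥0) (f : ι → ℝ → ℝ) (U : Set ℝ)
    (h : ∀ i ∈ t, LipschitzOnWith (K i) (f i) U) :
    LipschitzOnWith (∑ i ∈ t, K i) (fun μ => ∑ i ∈ t, f i μ) U := by
  rw [lipschitzOnWith_iff_dist_le_mul]
  intro x hx y hy
  calc dist (∑ i ∈ t, f i x) (∑ i ∈ t, f i y) ≤ ∑ i ∈ t, dist (f i x) (f i y) :=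
        dist_sum_sum_le t (fun i => f i x) (fun i => f i y)
    _ ≤ ∑ i ∈ t, (K i : ℝ) * dist x y := by
        refine Finset.sum_le_sum fun i hi => ?_
        exact lipschitzOnWith_iff_dist_le_mul.mp (h i hi) x hx y hy
    _ = (↑(∑ i ∈ t, K i) : ℝ) * dist x y := by
        rw [NNReal.coe_sum, Finset.sum_mul]

theorem stmt2 {n : ℕ} :
    (∀ s : ℝ, 0 ≤ s →
      (∀ μ : ℝ, 0 < μ → HasDerivAt (fun μ' => phi s μ') (phiM s μ) μ) ∧
      ContinuousOn (fun μ => phiM s μ) (Ioi 0) ∧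
      (∀ μ₀ ∈ Ioi (0 : ℝ), ∃ K : ℝ≥0, ∃ U ∈ nhdsWithin μ₀ (Ioi (0 : ℝ)),
        LipschitzOnWith K (fun μ => phiM s μ) U)) ∧
    (∀ x : EuclideanSpace ℝ (Fin n), (∀ i, 0 ≤ x i) →
      (∀ μ : ℝ, 0 < μ → HasDerivAt (fun μ' => Phi x μ') (∑ i, phiM (x i) μ) μ) ∧
      ContinuousOn (fun μ => ∑ i, phiM (x i) μ) (Ioi 0) ∧
      (∀ μ₀ ∈ Ioi (0 : ℝ), ∃ K : ℝ≥0, ∃ U ∈ nhdsWithin μ₀ (Ioi (0 : ℝ)),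
        LipschitzOnWith K (fun μ => ∑ i, phiM (x i) μ) U)) := by
  constructor
  · intro s hs
    exact ⟨fun μ hμ => scalar_deriv s hs hμ, cont_phiM s hs, fun μ₀ hμ₀ => lip_phiM s hs hμ₀⟩
  · intro x hx
    refine ⟨fun μ hμ => ?_, ?_, fun μ₀ hμ₀ => ?_⟩
    · have h := HasDerivAt.fun_sum (u := Finset.univ)
        (fun i _ => scalar_deriv (x i) (hx i) hμ)
      simpa [Phi] using h
    · exact continuousOn_finset_sum _ fun i _ => cont_phiM (x i) (hx i)
    · have h := fun i : Fin n => lip_phiM (x i) (hx i) hμ₀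
      choose K U hU hl using h
      refine ⟨∑ i, K i, ⋂ i, U i, Filter.iInter_mem.mpr hU, ?_⟩
      exact lip_sum Finset.univ K (fun i μ => phiM (x i) μ) _
        (fun i _ => (hl i).mono (Set.iInter_subset U i))
end

section
/- Let 0 < μ̲ ≤ μ̄ and let X = {x ∈ ℝⁿ : 0 ≤ x ≤ v} with v ∈ ℝⁿ, v ≥ 0. Then the maps (x,μ) ↦ ∇ₓΘ(x,μ) (where (∇ₓΘ(x,μ))_i = ∂θ/∂s(x_i,μ)) and (x,μ) ↦ ∂Θ/∂μ(x,μ) (equal to Σ_{i=1}^n ∂θ/∂μ(x_i,μ)) are bounded and globally Lipschitz continuous on X × [μ̲, μ̄]. -/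
open Filter Set
open scoped NNReal

/-! ### Auxiliary lemmas -/

/-- A closed-form Lipschitz building block: `gfun s μ = max 0 (min (μ - s) (2μ/3))`. -/
noncomputable def gfun (s μ : ℝ) : ℝ := max 0 (min (μ - s) (2 * μ / 3))

lemma gfun_nonneg (s μ : ℝ) : 0 ≤ gfun s μ := le_max_left _ _

lemma gfun_le {s μ : ℝ} (hμ : 0 ≤ μ) : gfun s μ ≤ 2 * μ / 3 := by
  apply max_le (by linarith) (min_le_right _ _)

lemma gfun_lip (s s' μ μ' : ℝ) : |gfun s μ - gfun s' μ'| ≤ |s - s'| + |μ - μ'| := by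
  unfold gfun
  calc |max 0 (min (μ - s) (2 * μ / 3)) - max 0 (min (μ' - s') (2 * μ' / 3))|
      ≤ max |(0:ℝ) - 0| |min (μ - s) (2 * μ / 3) - min (μ' - s') (2 * μ' / 3)| :=
        abs_max_sub_max_le_max _ _ _ _
    _ ≤ |s - s'| + |μ - μ'| := by
        apply max_le (by simp; positivity)
        calc |min (μ - s) (2 * μ / 3) - min (μ' - s') (2 * μ' / 3)|
            ≤ max |(μ - s) - (μ' - s')| |2 * μ / 3 - 2 * μ' / 3| :=
              abs_min_sub_min_le_max _ _ _ _
          _ ≤ |s - s'| + |μ - μ'| := by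
              apply max_le
              · calc |(μ - s) - (μ' - s')| = |(μ - μ') + -(s - s')| := by ring_nf
                  _ ≤ |μ - μ'| + |-(s - s')| := abs_add_le _ _
                  _ ≤ |s - s'| + |μ - μ'| := by rw [abs_neg]; linarith
              · have : |2 * μ / 3 - 2 * μ' / 3| = (2/3) * |μ - μ'| := by
                  rw [← abs_of_nonneg (by norm_num : (0:ℝ) ≤ 2/3), ← abs_mul]; ring_nf
                rw [this]; have := abs_nonneg (s - s'); have := abs_nonneg (μ - μ'); linarith

lemma phiS_eq {s μ : ℝ} (hμ : 0 < μ) : phiS s μ = 9 / (4 * μ ^ 2) * gfun s μ := by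
  unfold phiS gfun
  by_cases h1 : s < μ / 3
  · rw [if_pos h1, min_eq_right (by linarith), max_eq_right (by linarith)]
    field_simp; ring
  · rw [if_neg h1]
    by_cases h2 : s ≤ μ
    · rw [if_pos h2, min_eq_left (by push_neg at h1; linarith),
        max_eq_right (by linarith)]
    · rw [if_neg h2, min_eq_left (by push_neg at h2; linarith),
        max_eq_left (by push_neg at h2; linarith)]
      ring

lemma phiM_eq {s μ : ℝ} (hμ : 0 < μ) : phiM s μ = -(9 * s / (4 * μ ^ 3)) * gfun s μ := by
  unfold phiM gfun
  by_cases h1 : 3 * s < μ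
  · rw [if_pos h1, min_eq_right (by linarith), max_eq_right (by linarith)]
    field_simp; ring
  · rw [if_neg h1]
    by_cases h2 : s ≤ μ
    · rw [if_pos h2, min_eq_left (by push_neg at h1; linarith),
        max_eq_right (by linarith)]
      field_simp
    · rw [if_neg h2, min_eq_left (by push_neg at h2; linarith),
        max_eq_left (by push_neg at h2; linarith)]
      ring

lemma phiS_abs_le {s μ μlo : ℝ} (h0 : 0 < μlo) (h1 : μlo ≤ μ) :
    |phiS s μ| ≤ 3 / (2 * μlo) := by
  have hμ : 0 < μ := lt_of_lt_of_le h0 h1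
  rw [phiS_eq hμ, abs_of_nonneg (mul_nonneg (by positivity) (gfun_nonneg s μ))]
  calc 9 / (4 * μ ^ 2) * gfun s μ ≤ 9 / (4 * μ ^ 2) * (2 * μ / 3) :=
        mul_le_mul_of_nonneg_left (gfun_le hμ.le) (by positivity)
    _ = 3 / (2 * μ) := by field_simp; ring
    _ ≤ 3 / (2 * μlo) := by gcongr

lemma inv_sq_diff {μ μ' μlo μhi : ℝ} (h0 : 0 < μlo) (hhi : 0 < μhi)
    (ha : μlo ≤ μ) (hb : μ ≤ μhi) (ha' : μlo ≤ μ') (hb' : μ' ≤ μhi) :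
    |9 / (4 * μ ^ 2) - 9 / (4 * μ' ^ 2)| ≤ 9 * (2 * μhi) / (4 * μlo ^ 4) * |μ - μ'| := by
  have hμ : 0 < μ := lt_of_lt_of_le h0 ha
  have hμ' : 0 < μ' := lt_of_lt_of_le h0 ha'
  have key : 9 / (4 * μ ^ 2) - 9 / (4 * μ' ^ 2)
      = 9 * ((μ' - μ) * (μ' + μ)) / (4 * (μ ^ 2 * μ' ^ 2)) := by
    field_simp; ring
  rw [key, abs_div, abs_of_nonneg (by positivity : (0:ℝ) ≤ 4 * (μ ^ 2 * μ' ^ 2))]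
  rw [abs_mul, abs_mul, abs_of_nonneg (by norm_num : (0:ℝ) ≤ 9)]
  have h1 : |μ' + μ| ≤ 2 * μhi := by
    rw [abs_of_nonneg (by linarith)]; linarith
  have h2 : |μ' - μ| = |μ - μ'| := abs_sub_comm _ _
  rw [h2]
  have hden : 4 * μlo ^ 4 ≤ 4 * (μ ^ 2 * μ' ^ 2) := by
    have e1 : μlo ^ 2 ≤ μ ^ 2 := by nlinarith
    have e2 : μlo ^ 2 ≤ μ' ^ 2 := by nlinarith
    nlinarith [mul_le_mul e1 e2 (by positivity) (by positivity)]
  have hnum : 9 * (|μ - μ'| * |μ' + μ|) ≤ 9 * (|μ - μ'| * (2 * μhi)) := by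
    have := abs_nonneg (μ - μ')
    nlinarith [abs_nonneg (μ' + μ)]
  calc 9 * (|μ - μ'| * |μ' + μ|) / (4 * (μ ^ 2 * μ' ^ 2))
      ≤ 9 * (|μ - μ'| * (2 * μhi)) / (4 * μlo ^ 4) :=
        div_le_div₀ (by positivity) hnum (by positivity) hden
    _ = 9 * (2 * μhi) / (4 * μlo ^ 4) * |μ - μ'| := by ring

lemma phiS_diff_le {s s' μ μ' μlo μhi : ℝ} (h0 : 0 < μlo)
    (ha : μlo ≤ μ) (hb : μ ≤ μhi) (ha' : μlo ≤ μ') (hb' : μ' ≤ μhi) :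
    |phiS s μ - phiS s' μ'| ≤ (3 / μlo ^ 2 + 3 * μhi ^ 2 / μlo ^ 4) * (|s - s'| + |μ - μ'|) := by
  have hμ : 0 < μ := lt_of_lt_of_le h0 ha
  have hμ' : 0 < μ' := lt_of_lt_of_le h0 ha'
  have hhi : 0 < μhi := lt_of_lt_of_le hμ hb
  rw [phiS_eq hμ, phiS_eq hμ']
  have split : 9 / (4 * μ ^ 2) * gfun s μ - 9 / (4 * μ' ^ 2) * gfun s' μ'
      = 9 / (4 * μ ^ 2) * (gfun s μ - gfun s' μ')
        + (9 / (4 * μ ^ 2) - 9 / (4 * μ' ^ 2)) * gfun s' μ' := by ring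
  rw [split]
  have t1 : |9 / (4 * μ ^ 2) * (gfun s μ - gfun s' μ')|
      ≤ 9 / (4 * μlo ^ 2) * (|s - s'| + |μ - μ'|) := by
    rw [abs_mul, abs_of_nonneg (by positivity : (0:ℝ) ≤ 9 / (4 * μ ^ 2))]
    have hle : 9 / (4 * μ ^ 2) ≤ 9 / (4 * μlo ^ 2) := by gcongr
    have hg := gfun_lip s s' μ μ'
    exact mul_le_mul hle hg (abs_nonneg _) (by positivity)
  have t2 : |(9 / (4 * μ ^ 2) - 9 / (4 * μ' ^ 2)) * gfun s' μ'|
      ≤ 9 * (2 * μhi) / (4 * μlo ^ 4) * |μ - μ'| * (2 * μhi / 3) := by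
    rw [abs_mul, abs_of_nonneg (gfun_nonneg s' μ')]
    have h1 := inv_sq_diff h0 hhi ha hb ha' hb'
    have h2 : gfun s' μ' ≤ 2 * μhi / 3 := le_trans (gfun_le hμ'.le) (by linarith)
    exact mul_le_mul h1 h2 (gfun_nonneg s' μ') (by positivity)
  calc |9 / (4 * μ ^ 2) * (gfun s μ - gfun s' μ')
        + (9 / (4 * μ ^ 2) - 9 / (4 * μ' ^ 2)) * gfun s' μ'|
      ≤ |9 / (4 * μ ^ 2) * (gfun s μ - gfun s' μ')|
        + |(9 / (4 * μ ^ 2) - 9 / (4 * μ' ^ 2)) * gfun s' μ'| := abs_add_le _ _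
    _ ≤ (3 / μlo ^ 2 + 3 * μhi ^ 2 / μlo ^ 4) * (|s - s'| + |μ - μ'|) := by
        have e1 : (9:ℝ) / (4 * μlo ^ 2) ≤ 3 / μlo ^ 2 := by
          rw [div_le_div_iff₀ (by positivity) (by positivity)]; nlinarith
        have e2 : 9 * (2 * μhi) / (4 * μlo ^ 4) * |μ - μ'| * (2 * μhi / 3)
            = 3 * μhi ^ 2 / μlo ^ 4 * |μ - μ'| := by field_simp; ring
        rw [e2] at t2
        have hs := abs_nonneg (s - s'); have hm := abs_nonneg (μ - μ')
        have e3 := mul_le_mul_of_nonneg_right e1 (add_nonneg hs hm)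
        have e4 : 3 * μhi ^ 2 / μlo ^ 4 * |μ - μ'| ≤ 3 * μhi ^ 2 / μlo ^ 4 * (|s - s'| + |μ - μ'|) := by
          apply mul_le_mul_of_nonneg_left (by linarith) (by positivity)
        nlinarith [t1, t2]

lemma phiM_abs_le {s μ μlo μhi C : ℝ} (h0 : 0 < μlo) (ha : μlo ≤ μ) (hb : μ ≤ μhi)
    (hs : 0 ≤ s) (hsC : s ≤ C) :
    |phiM s μ| ≤ 9 * C / (4 * μlo ^ 3) * (2 * μhi / 3) := by
  have hμ : 0 < μ := lt_of_lt_of_le h0 ha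
  have hC : 0 ≤ C := le_trans hs hsC
  rw [phiM_eq hμ, abs_mul, abs_neg, abs_of_nonneg (by positivity : (0:ℝ) ≤ 9 * s / (4 * μ ^ 3)),
    abs_of_nonneg (gfun_nonneg s μ)]
  have e1 : 9 * s / (4 * μ ^ 3) ≤ 9 * C / (4 * μlo ^ 3) := by gcongr
  have e2 : gfun s μ ≤ 2 * μhi / 3 := le_trans (gfun_le hμ.le) (by linarith)
  exact mul_le_mul e1 e2 (gfun_nonneg s μ) (by positivity)

lemma coef_diff {s s' μ μ' μlo μhi C : ℝ} (h0 : 0 < μlo) (hhi : 0 < μhi)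
    (ha : μlo ≤ μ) (hb : μ ≤ μhi) (ha' : μlo ≤ μ') (hb' : μ' ≤ μhi)
    (hs' : 0 ≤ s') (hs'C : s' ≤ C) :
    |9 * s / (4 * μ ^ 3) - 9 * s' / (4 * μ' ^ 3)|
      ≤ 9 / (4 * μlo ^ 3) * |s - s'| + 9 * C * (3 * μhi ^ 2) / (4 * μlo ^ 6) * |μ - μ'| := by
  have hμ : 0 < μ := lt_of_lt_of_le h0 ha
  have hμ' : 0 < μ' := lt_of_lt_of_le h0 ha'
  have hC : 0 ≤ C := le_trans hs' hs'C
  have split : 9 * s / (4 * μ ^ 3) - 9 * s' / (4 * μ' ^ 3)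
      = 9 * (s - s') / (4 * μ ^ 3) + 9 * s' * ((μ' - μ) * (μ' ^ 2 + μ' * μ + μ ^ 2)) / (4 * (μ ^ 3 * μ' ^ 3)) := by
    field_simp; ring
  rw [split]
  have t1 : |9 * (s - s') / (4 * μ ^ 3)| ≤ 9 / (4 * μlo ^ 3) * |s - s'| := by
    rw [abs_div, abs_of_nonneg (by positivity : (0:ℝ) ≤ 4 * μ ^ 3), abs_mul,
      abs_of_nonneg (by norm_num : (0:ℝ) ≤ 9)]
    calc 9 * |s - s'| / (4 * μ ^ 3) ≤ 9 * |s - s'| / (4 * μlo ^ 3) := by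
          gcongr
      _ = 9 / (4 * μlo ^ 3) * |s - s'| := by ring
  have t2 : |9 * s' * ((μ' - μ) * (μ' ^ 2 + μ' * μ + μ ^ 2)) / (4 * (μ ^ 3 * μ' ^ 3))|
      ≤ 9 * C * (3 * μhi ^ 2) / (4 * μlo ^ 6) * |μ - μ'| := by
    rw [abs_div, abs_of_nonneg (by positivity : (0:ℝ) ≤ 4 * (μ ^ 3 * μ' ^ 3)), abs_mul,
      abs_of_nonneg (by positivity : (0:ℝ) ≤ 9 * s'), abs_mul, abs_sub_comm μ' μ]
    have hq : |μ' ^ 2 + μ' * μ + μ ^ 2| ≤ 3 * μhi ^ 2 := by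
      rw [abs_of_nonneg (by positivity)]; nlinarith
    have hden : 4 * μlo ^ 6 ≤ 4 * (μ ^ 3 * μ' ^ 3) := by
      have e1 : μlo ^ 3 ≤ μ ^ 3 := pow_le_pow_left₀ h0.le ha 3
      have e2 : μlo ^ 3 ≤ μ' ^ 3 := pow_le_pow_left₀ h0.le ha' 3
      nlinarith [mul_le_mul e1 e2 (by positivity) (by positivity)]
    have hnum : 9 * s' * (|μ - μ'| * |μ' ^ 2 + μ' * μ + μ ^ 2|)
        ≤ 9 * C * (3 * μhi ^ 2) * |μ - μ'| := by
      have h1 : 9 * s' ≤ 9 * C := by linarith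
      have h2 : |μ - μ'| * |μ' ^ 2 + μ' * μ + μ ^ 2| ≤ |μ - μ'| * (3 * μhi ^ 2) :=
        mul_le_mul_of_nonneg_left hq (abs_nonneg _)
      calc 9 * s' * (|μ - μ'| * |μ' ^ 2 + μ' * μ + μ ^ 2|)
          ≤ 9 * C * (|μ - μ'| * (3 * μhi ^ 2)) := by
            exact mul_le_mul h1 h2 (mul_nonneg (abs_nonneg _) (abs_nonneg _)) (by positivity)
        _ = 9 * C * (3 * μhi ^ 2) * |μ - μ'| := by ring
    calc 9 * s' * (|μ - μ'| * |μ' ^ 2 + μ' * μ + μ ^ 2|) / (4 * (μ ^ 3 * μ' ^ 3))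
        ≤ 9 * C * (3 * μhi ^ 2) * |μ - μ'| / (4 * μlo ^ 6) :=
          div_le_div₀ (by positivity) hnum (by positivity) hden
      _ = 9 * C * (3 * μhi ^ 2) / (4 * μlo ^ 6) * |μ - μ'| := by ring
  calc |9 * (s - s') / (4 * μ ^ 3) + 9 * s' * ((μ' - μ) * (μ' ^ 2 + μ' * μ + μ ^ 2)) / (4 * (μ ^ 3 * μ' ^ 3))|
      ≤ |9 * (s - s') / (4 * μ ^ 3)| + |9 * s' * ((μ' - μ) * (μ' ^ 2 + μ' * μ + μ ^ 2)) / (4 * (μ ^ 3 * μ' ^ 3))| :=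
        abs_add_le _ _
    _ ≤ 9 / (4 * μlo ^ 3) * |s - s'| + 9 * C * (3 * μhi ^ 2) / (4 * μlo ^ 6) * |μ - μ'| := by
        linarith

lemma phiM_diff_le {s s' μ μ' μlo μhi C : ℝ} (h0 : 0 < μlo) (hhi : 0 < μhi)
    (ha : μlo ≤ μ) (hb : μ ≤ μhi) (ha' : μlo ≤ μ') (hb' : μ' ≤ μhi)
    (hs : 0 ≤ s) (hsC : s ≤ C) (hs' : 0 ≤ s') (hs'C : s' ≤ C) :
    |phiM s μ - phiM s' μ'|
      ≤ (9 * C / (4 * μlo ^ 3) + 9 / (4 * μlo ^ 3) * (2 * μhi / 3)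
          + 9 * C * (3 * μhi ^ 2) / (4 * μlo ^ 6) * (2 * μhi / 3)) * (|s - s'| + |μ - μ'|) := by
  have hμ : 0 < μ := lt_of_lt_of_le h0 ha
  have hμ' : 0 < μ' := lt_of_lt_of_le h0 ha'
  have hC : 0 ≤ C := le_trans hs hsC
  rw [phiM_eq hμ, phiM_eq hμ']
  have split : -(9 * s / (4 * μ ^ 3)) * gfun s μ - -(9 * s' / (4 * μ' ^ 3)) * gfun s' μ'
      = -(9 * s / (4 * μ ^ 3)) * (gfun s μ - gfun s' μ')
        - (9 * s / (4 * μ ^ 3) - 9 * s' / (4 * μ' ^ 3)) * gfun s' μ' := by ring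
  rw [split]
  have t1 : |(-(9 * s / (4 * μ ^ 3))) * (gfun s μ - gfun s' μ')|
      ≤ 9 * C / (4 * μlo ^ 3) * (|s - s'| + |μ - μ'|) := by
    rw [abs_mul, abs_neg, abs_of_nonneg (by positivity : (0:ℝ) ≤ 9 * s / (4 * μ ^ 3))]
    have e1 : 9 * s / (4 * μ ^ 3) ≤ 9 * C / (4 * μlo ^ 3) := by gcongr
    exact mul_le_mul e1 (gfun_lip s s' μ μ') (abs_nonneg _) (by positivity)
  have t2 : |(9 * s / (4 * μ ^ 3) - 9 * s' / (4 * μ' ^ 3)) * gfun s' μ'|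
      ≤ (9 / (4 * μlo ^ 3) * |s - s'| + 9 * C * (3 * μhi ^ 2) / (4 * μlo ^ 6) * |μ - μ'|)
         * (2 * μhi / 3) := by
    rw [abs_mul, abs_of_nonneg (gfun_nonneg s' μ')]
    have h1 := coef_diff h0 hhi ha hb ha' hb' hs' hs'C (s := s)
    have h2 : gfun s' μ' ≤ 2 * μhi / 3 := le_trans (gfun_le hμ'.le) (by linarith)
    exact mul_le_mul h1 h2 (gfun_nonneg s' μ') (by positivity)
  have habs := abs_sub (-(9 * s / (4 * μ ^ 3)) * (gfun s μ - gfun s' μ'))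
      ((9 * s / (4 * μ ^ 3) - 9 * s' / (4 * μ' ^ 3)) * gfun s' μ')
  have hs1 := abs_nonneg (s - s'); have hm1 := abs_nonneg (μ - μ')
  have c1 : (0:ℝ) ≤ 9 / (4 * μlo ^ 3) * (2 * μhi / 3) := by positivity
  have c2 : (0:ℝ) ≤ 9 * C * (3 * μhi ^ 2) / (4 * μlo ^ 6) * (2 * μhi / 3) := by positivity
  nlinarith [t1, t2]

lemma norm_le_sum_abs {n : ℕ} (y : EuclideanSpace ℝ (Fin n)) : ‖y‖ ≤ ∑ i, |y i| := by
  rw [EuclideanSpace.norm_eq]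
  have key : ∑ i, ‖y i‖ ^ 2 ≤ (∑ i, |y i|) ^ 2 := by
    have h1 : ∀ i ∈ Finset.univ, ‖y i‖ ^ 2 ≤ |y i| * ∑ j, |y j| := by
      intro i _
      rw [Real.norm_eq_abs, sq]
      apply mul_le_mul_of_nonneg_left _ (abs_nonneg _)
      exact Finset.single_le_sum (fun j _ => abs_nonneg (y j)) (Finset.mem_univ i)
    calc ∑ i, ‖y i‖ ^ 2 ≤ ∑ i, |y i| * ∑ j, |y j| := Finset.sum_le_sum h1
      _ = (∑ i, |y i|) ^ 2 := by rw [← Finset.sum_mul, sq]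
  calc Real.sqrt (∑ i, ‖y i‖ ^ 2) ≤ Real.sqrt ((∑ i, |y i|) ^ 2) := Real.sqrt_le_sqrt key
    _ = abs (∑ i, |y i|) := Real.sqrt_sq_eq_abs _
    _ = ∑ i, |y i| := abs_of_nonneg (Finset.sum_nonneg fun i _ => abs_nonneg _)

lemma abs_coord_le_norm {n : ℕ} (y : EuclideanSpace ℝ (Fin n)) (i : Fin n) : |y i| ≤ ‖y‖ := by
  rw [EuclideanSpace.norm_eq]
  calc |y i| = Real.sqrt (‖y i‖ ^ 2) := by rw [Real.sqrt_sq_eq_abs, Real.norm_eq_abs, abs_abs]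
    _ ≤ Real.sqrt (∑ j, ‖y j‖ ^ 2) := Real.sqrt_le_sqrt
        (Finset.single_le_sum (fun j _ => sq_nonneg ‖y j‖) (Finset.mem_univ i))

theorem stmt3 {n : ℕ} (v : EuclideanSpace ℝ (Fin n)) (hv : ∀ i, 0 ≤ v i)
    (μlo μhi : ℝ) (hμlo : 0 < μlo) (hle : μlo ≤ μhi) :
    (∃ M : ℝ, ∀ p : EuclideanSpace ℝ (Fin n) × ℝ,
        p ∈ {x : EuclideanSpace ℝ (Fin n) | ∀ i, 0 ≤ x i ∧ x i ≤ v i} ×ˢ Icc μlo μhi →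
        ‖gradPhi p.1 p.2‖ ≤ M) ∧
    (∃ K : ℝ≥0, LipschitzOnWith K
        (fun p : EuclideanSpace ℝ (Fin n) × ℝ => gradPhi p.1 p.2)
        ({x : EuclideanSpace ℝ (Fin n) | ∀ i, 0 ≤ x i ∧ x i ≤ v i} ×ˢ Icc μlo μhi)) ∧
    (∃ M : ℝ, ∀ p : EuclideanSpace ℝ (Fin n) × ℝ,
        p ∈ {x : EuclideanSpace ℝ (Fin n) | ∀ i, 0 ≤ x i ∧ x i ≤ v i} ×ˢ Icc μlo μhi →
        |∑ i, phiM (p.1 i) p.2| ≤ M) ∧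
    (∃ K : ℝ≥0, LipschitzOnWith K
        (fun p : EuclideanSpace ℝ (Fin n) × ℝ => ∑ i, phiM (p.1 i) p.2)
        ({x : EuclideanSpace ℝ (Fin n) | ∀ i, 0 ≤ x i ∧ x i ≤ v i} ×ˢ Icc μlo μhi)) := by
  have hhi : 0 < μhi := lt_of_lt_of_le hμlo hle
  set C : ℝ := (∑ i, v i) + 1 with hCdef
  have hC : 0 < C := by
    have : 0 ≤ ∑ i, v i := Finset.sum_nonneg fun i _ => hv i
    simp only [hCdef]; linarith
  have hxC : ∀ (x : EuclideanSpace ℝ (Fin n)), (∀ i, 0 ≤ x i ∧ x i ≤ v i) →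
      ∀ i, x i ≤ C := by
    intro x hx i
    have h1 : v i ≤ ∑ j, v j := Finset.single_le_sum (fun j _ => hv j) (Finset.mem_univ i)
    have := (hx i).2
    simp only [hCdef]; linarith
  set K1 : ℝ := 3 / μlo ^ 2 + 3 * μhi ^ 2 / μlo ^ 4 with hK1
  have hK1nn : 0 ≤ K1 := by positivity
  set K2 : ℝ := 9 * C / (4 * μlo ^ 3) + 9 / (4 * μlo ^ 3) * (2 * μhi / 3)
      + 9 * C * (3 * μhi ^ 2) / (4 * μlo ^ 6) * (2 * μhi / 3) with hK2
  have hK2nn : 0 ≤ K2 := by positivity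
  refine ⟨⟨(n : ℝ) * (3 / (2 * μlo)), ?_⟩, ⟨Real.toNNReal (2 * n * K1), ?_⟩,
    ⟨(n : ℝ) * (9 * C / (4 * μlo ^ 3) * (2 * μhi / 3)), ?_⟩,
    ⟨Real.toNNReal (2 * n * K2), ?_⟩⟩
  · -- boundedness of gradPhi
    intro p hp
    rw [Set.mem_prod] at hp
    calc ‖gradPhi p.1 p.2‖ ≤ ∑ i, |gradPhi p.1 p.2 i| := norm_le_sum_abs _
      _ ≤ ∑ _i : Fin n, 3 / (2 * μlo) := by
          apply Finset.sum_le_sum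
          intro i _
          exact phiS_abs_le (s := p.1 i) hμlo hp.2.1
      _ = (n : ℝ) * (3 / (2 * μlo)) := by
          rw [Finset.sum_const, Finset.card_univ, Fintype.card_fin, nsmul_eq_mul]
  · -- Lipschitz of gradPhi
    rw [lipschitzOnWith_iff_dist_le_mul]
    intro p hp q hq
    rw [Set.mem_prod] at hp hq
    rw [Real.coe_toNNReal _ (by positivity)]
    rw [dist_eq_norm]
    have hcoord : ∀ i : Fin n, |p.1 i - q.1 i| ≤ dist p q := by
      intro i
      have h1 : |p.1 i - q.1 i| ≤ ‖p.1 - q.1‖ := by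
        have := abs_coord_le_norm (p.1 - q.1) i
        simpa using this
      have h2 : ‖p.1 - q.1‖ = dist p.1 q.1 := (dist_eq_norm _ _).symm
      have h3 : dist p.1 q.1 ≤ dist p q := by rw [Prod.dist_eq]; exact le_max_left _ _
      linarith
    have hmu : |p.2 - q.2| ≤ dist p q := by
      have h3 : dist p.2 q.2 ≤ dist p q := by rw [Prod.dist_eq]; exact le_max_right _ _
      rw [← Real.dist_eq]; exact h3
    have hdnn : 0 ≤ dist p q := dist_nonneg
    calc ‖gradPhi p.1 p.2 - gradPhi q.1 q.2‖
        ≤ ∑ i, |(gradPhi p.1 p.2 - gradPhi q.1 q.2) i| := norm_le_sum_abs _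
      _ = ∑ i, |phiS (p.1 i) p.2 - phiS (q.1 i) q.2| := by
          apply Finset.sum_congr rfl; intro i _; simp [gradPhi]
      _ ≤ ∑ _i : Fin n, K1 * (2 * dist p q) := by
          apply Finset.sum_le_sum
          intro i _
          calc |phiS (p.1 i) p.2 - phiS (q.1 i) q.2|
              ≤ K1 * (|p.1 i - q.1 i| + |p.2 - q.2|) :=
                phiS_diff_le hμlo hp.2.1 hp.2.2 hq.2.1 hq.2.2
            _ ≤ K1 * (2 * dist p q) := by
                apply mul_le_mul_of_nonneg_left _ hK1nn
                have := hcoord i; linarith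
      _ = 2 * n * K1 * dist p q := by
          rw [Finset.sum_const, Finset.card_univ, Fintype.card_fin, nsmul_eq_mul]; ring
  · -- boundedness of μ-derivative
    intro p hp
    rw [Set.mem_prod] at hp
    calc |∑ i, phiM (p.1 i) p.2| ≤ ∑ i, |phiM (p.1 i) p.2| :=
          Finset.abs_sum_le_sum_abs _ _
      _ ≤ ∑ _i : Fin n, 9 * C / (4 * μlo ^ 3) * (2 * μhi / 3) := by
          apply Finset.sum_le_sum
          intro i _
          exact phiM_abs_le hμlo hp.2.1 hp.2.2 (hp.1 i).1 (hxC p.1 hp.1 i)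
      _ = (n : ℝ) * (9 * C / (4 * μlo ^ 3) * (2 * μhi / 3)) := by
          rw [Finset.sum_const, Finset.card_univ, Fintype.card_fin, nsmul_eq_mul]
  · -- Lipschitz of μ-derivative
    rw [lipschitzOnWith_iff_dist_le_mul]
    intro p hp q hq
    rw [Set.mem_prod] at hp hq
    rw [Real.coe_toNNReal _ (by positivity)]
    rw [Real.dist_eq]
    have hcoord : ∀ i : Fin n, |p.1 i - q.1 i| ≤ dist p q := by
      intro i
      have h1 : |p.1 i - q.1 i| ≤ ‖p.1 - q.1‖ := by
        have := abs_coord_le_norm (p.1 - q.1) i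
        simpa using this
      have h2 : ‖p.1 - q.1‖ = dist p.1 q.1 := (dist_eq_norm _ _).symm
      have h3 : dist p.1 q.1 ≤ dist p q := by rw [Prod.dist_eq]; exact le_max_left _ _
      linarith
    have hmu : |p.2 - q.2| ≤ dist p q := by
      have h3 : dist p.2 q.2 ≤ dist p q := by rw [Prod.dist_eq]; exact le_max_right _ _
      rw [← Real.dist_eq]; exact h3
    have hdnn : 0 ≤ dist p q := dist_nonneg
    calc |∑ i, phiM (p.1 i) p.2 - ∑ i, phiM (q.1 i) q.2|
        = |∑ i, (phiM (p.1 i) p.2 - phiM (q.1 i) q.2)| := by rw [Finset.sum_sub_distrib]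
      _ ≤ ∑ i, |phiM (p.1 i) p.2 - phiM (q.1 i) q.2| := Finset.abs_sum_le_sum_abs _ _
      _ ≤ ∑ _i : Fin n, K2 * (2 * dist p q) := by
          apply Finset.sum_le_sum
          intro i _
          calc |phiM (p.1 i) p.2 - phiM (q.1 i) q.2|
              ≤ K2 * (|p.1 i - q.1 i| + |p.2 - q.2|) :=
                phiM_diff_le hμlo hhi hp.2.1 hp.2.2 hq.2.1 hq.2.2
                  (hp.1 i).1 (hxC p.1 hp.1 i) (hq.1 i).1 (hxC q.1 hq.1 i)
            _ ≤ K2 * (2 * dist p q) := by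
                apply mul_le_mul_of_nonneg_left _ hK2nn
                have := hcoord i; linarith
      _ = 2 * n * K2 * dist p q := by
          rw [Finset.sum_const, Finset.card_univ, Fintype.card_fin, nsmul_eq_mul]; ring
end

section
/- Let Ω ⊆ ℝⁿ be a nonempty, closed, bounded and convex set, γ > 0, h : [0,+∞) → ℝⁿ a continuous function with h(t) ∈ Ω for all t ≥ 0, and let x : [0,+∞) → ℝⁿ be continuously differentiable with x(0) ∈ Ω and ẋ(t) = γ(−x(t) + h(t)) for all t > 0. Then x(t) ∈ Ω for all t ≥ 0. -/
open Filter Set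
open scoped NNReal

theorem stmt4 {n : ℕ} (Ω : Set (EuclideanSpace ℝ (Fin n))) (hne : Ω.Nonempty)
    (hcl : IsClosed Ω) (hbd : Bornology.IsBounded Ω) (hconv : Convex ℝ Ω)
    (γ : ℝ) (hγ : 0 < γ)
    (h : ℝ → EuclideanSpace ℝ (Fin n)) (hc : ContinuousOn h (Ici 0))
    (hΩ : ∀ t ∈ Ici (0 : ℝ), h t ∈ Ω)
    (x x' : ℝ → EuclideanSpace ℝ (Fin n))
    (hder : ∀ t ∈ Ici (0 : ℝ), HasDerivWithinAt x (x' t) (Ici 0) t)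
    (hx'c : ContinuousOn x' (Ici 0))
    (hx0 : x 0 ∈ Ω)
    (hode : ∀ t > (0 : ℝ), x' t = γ • (-(x t) + h t)) :
    ∀ t ∈ Ici (0 : ℝ), x t ∈ Ω := by
  intro T hT
  by_contra hxT
  obtain ⟨ℓ, u, hsep, hlt⟩ := geometric_hahn_banach_closed_point hconv hcl hxT
  -- F t = exp(γ t) * (ℓ (x t) - u) is antitone on [0, ∞)
  set F : ℝ → ℝ := fun t => Real.exp (γ * t) * (ℓ (x t) - u) with hF
  have hexp : ∀ t : ℝ, HasDerivAt (fun t => Real.exp (γ * t)) (γ * Real.exp (γ * t)) t := by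
    intro t
    have := (Real.hasDerivAt_exp (γ * t)).comp t ((hasDerivAt_id t).const_mul γ)
    simpa [mul_comm, Function.comp_def] using this
  have hFderW : ∀ t ∈ Ici (0:ℝ), HasDerivWithinAt F
      (γ * Real.exp (γ * t) * (ℓ (x t) - u) + Real.exp (γ * t) * ℓ (x' t)) (Ici 0) t := by
    intro t ht
    have hgx : HasDerivWithinAt (fun t => ℓ (x t) - u) (ℓ (x' t)) (Ici 0) t :=
      (ℓ.hasFDerivAt.comp_hasDerivWithinAt t (hder t ht)).sub_const u
    exact ((hexp t).hasDerivWithinAt).mul hgx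
  have hFcont : ContinuousOn F (Ici 0) := fun t ht => (hFderW t ht).continuousWithinAt
  have hFder : ∀ t ∈ Ioi (0:ℝ), HasDerivAt F (γ * Real.exp (γ * t) * (ℓ (h t) - u)) t := by
    intro t ht
    have hd := (hFderW t (mem_Ici.mpr (le_of_lt ht))).hasDerivAt (Ici_mem_nhds ht)
    have hval : γ * Real.exp (γ * t) * (ℓ (x t) - u) + Real.exp (γ * t) * ℓ (x' t)
        = γ * Real.exp (γ * t) * (ℓ (h t) - u) := by
      rw [hode t ht]
      have : ℓ (γ • (-(x t) + h t)) = γ * (ℓ (h t) - ℓ (x t)) := by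
        rw [map_smul, map_add, map_neg, smul_eq_mul]; ring
      rw [this]; ring
    rwa [hval] at hd
  have hanti : AntitoneOn F (Ici 0) := by
    apply antitoneOn_of_deriv_nonpos (convex_Ici 0) hFcont
    · intro t ht
      rw [interior_Ici] at ht
      exact (hFder t ht).differentiableAt.differentiableWithinAt
    · intro t ht
      rw [interior_Ici] at ht
      rw [(hFder t ht).deriv]
      have h1 : ℓ (h t) - u ≤ 0 := sub_nonpos.mpr (hsep (h t) (hΩ t (mem_Ici.mpr (le_of_lt ht)))).le
      have h2 : 0 ≤ γ * Real.exp (γ * t) := by positivity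
      exact mul_nonpos_of_nonneg_of_nonpos h2 h1
  have hFT : F T ≤ F 0 := hanti self_mem_Ici hT hT
  have hF0 : F 0 < 0 := by
    have : ℓ (x 0) - u < 0 := sub_neg.mpr (hsep (x 0) hx0)
    exact mul_neg_of_pos_of_neg (Real.exp_pos _) this
  have hFTpos : 0 < F T := by
    have : 0 < ℓ (x T) - u := sub_pos.mpr hlt
    exact mul_pos (Real.exp_pos _) this
  linarith
end

section
/- Let x : [0,+∞) → ℝⁿ be the solution of the network (NN) with initial point x₀ ∈ X, and suppose Assumption 1 holds. Let T ≥ 0 be such that μ(t) ∈ (μ*/2, μ*) for all t > T. If for some index i and some T' ≥ T one has x_i(T') ≤ μ*/6, then x_i(t) = x_i(T') e^{−γ(t−T')} for all t ≥ T'; in particular x_i(t) → 0 as t → +∞. -/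
open Filter Set
open scoped NNReal

open Topology in
private lemma proj_zero' {n : ℕ} (v : EuclideanSpace ℝ (Fin n)) (hv : ∀ i, 0 ≤ v i)
    (X : Set (EuclideanSpace ℝ (Fin n)))
    (hX : X = {x : EuclideanSpace ℝ (Fin n) | ∀ i, 0 ≤ x i ∧ x i ≤ v i})
    (P : EuclideanSpace ℝ (Fin n) → EuclideanSpace ℝ (Fin n))
    (hP : ∀ z, P z ∈ X ∧ ∀ y ∈ X, ‖z - P z‖ ≤ ‖z - y‖)
    (z : EuclideanSpace ℝ (Fin n)) (i : Fin n) (hz : z i ≤ 0) : P z i = 0 := by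
  classical
  set y : EuclideanSpace ℝ (Fin n) := WithLp.toLp 2 (Function.update (P z) i 0) with hy
  have hyi : y i = 0 := Function.update_self i 0 (P z).ofLp
  have hyj : ∀ j, j ≠ i → y j = P z j := fun j hj => Function.update_of_ne hj 0 (P z).ofLp
  have hPX : ∀ j, 0 ≤ P z j ∧ P z j ≤ v j := by
    have := (hP z).1; rw [hX] at this; exact this
  have hyX : y ∈ X := by
    rw [hX]
    intro j
    by_cases hj : j = i
    · subst hj; rw [hyi]; exact ⟨le_refl _, hv j⟩
    · rw [hyj j hj]; exact hPX j
  have hle : ‖z - P z‖ ≤ ‖z - y‖ := (hP z).2 y hyX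
  have hnorm : ∀ w : EuclideanSpace ℝ (Fin n), ‖w‖ ^ 2 = ∑ j, (w j) ^ 2 := by
    intro w
    rw [EuclideanSpace.norm_eq, Real.sq_sqrt (by positivity)]
    simp [sq_abs]
  have hsq : ∑ j, (z j - P z j) ^ 2 ≤ ∑ j, (z j - y j) ^ 2 := by
    have h1 : ‖z - P z‖ ^ 2 ≤ ‖z - y‖ ^ 2 := by
      exact pow_le_pow_left₀ (norm_nonneg _) hle 2
    rw [hnorm, hnorm] at h1
    simpa using h1
  have hterm : (z i - P z i) ^ 2 ≤ (z i) ^ 2 := by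
    have e1 := Finset.add_sum_erase Finset.univ (fun j => (z j - P z j) ^ 2) (Finset.mem_univ i)
    have e2 := Finset.add_sum_erase Finset.univ (fun j => (z j - y j) ^ 2) (Finset.mem_univ i)
    have e3 : ∑ j ∈ Finset.univ.erase i, (z j - P z j) ^ 2
        = ∑ j ∈ Finset.univ.erase i, (z j - y j) ^ 2 := by
      refine Finset.sum_congr rfl fun j hj => ?_
      rw [hyj j (Finset.ne_of_mem_erase hj)]
    simp only at e1 e2
    rw [hyi] at e2
    rw [← e1, ← e2, e3] at hsq
    have h4 := le_of_add_le_add_right hsq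
    simpa using h4
  have hp0 := (hPX i).1
  nlinarith [hterm, hp0, hz, sq_nonneg (P z i)]

open Topology in
theorem stmt9 {n : ℕ}
    (v : EuclideanSpace ℝ (Fin n)) (hv : ∀ i, 0 ≤ v i)
    (X : Set (EuclideanSpace ℝ (Fin n)))
    (hX : X = {x : EuclideanSpace ℝ (Fin n) | ∀ i, 0 ≤ x i ∧ x i ≤ v i})
    (f : EuclideanSpace ℝ (Fin n) → ℝ)
    (f' : EuclideanSpace ℝ (Fin n) → EuclideanSpace ℝ (Fin n))
    (hf : ∀ y, HasGradientAt f (f' y) y)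
    (hconv : ConvexOn ℝ univ f)
    (hlip : LocallyLipschitz f')
    (lam γ α₀ β μs : ℝ)
    (hlam : 0 < lam) (hγ : 0 < γ) (hα₀ : 0 < α₀) (hβ : 0 < β) (hμs : 0 < μs)
    (P : EuclideanSpace ℝ (Fin n) → EuclideanSpace ℝ (Fin n))
    (hP : ∀ z, P z ∈ X ∧ ∀ y ∈ X, ‖z - P z‖ ≤ ‖z - y‖)
    (x₀ : EuclideanSpace ℝ (Fin n)) (hx₀ : x₀ ∈ X)
    (x x' : ℝ → EuclideanSpace ℝ (Fin n))
    (hx0 : x 0 = x₀)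
    (hder : ∀ t ∈ Ici (0 : ℝ), HasDerivWithinAt x (x' t) (Ici 0) t)
    (hode : ∀ t ∈ Ici (0 : ℝ),
      x' t = γ • (P (x t - f' (x t) - lam • gradPhi (x t) (muFun α₀ β μs t)) - x t))
    (hx'c : ContinuousOn x' (Ici 0))
    (hxX : ∀ t ∈ Ici (0 : ℝ), x t ∈ X)
    (hn : 0 < n)
    (Lf : ℝ) (hLf0 : 0 < Lf) (hLf : ∀ y ∈ X, ∀ i, |f' y i| ≤ Lf)
    (hA1 : (∀ i, v i ≠ 0 → μs < v i) ∧
      μs < 3 * lam / (2 * ((⨆ i, v i) + Lf)) ∧ μs < 2 * lam / (n * Lf))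
    (T : ℝ) (hT : 0 ≤ T)
    (hμT : ∀ t > T, muFun α₀ β μs t ∈ Ioo (μs / 2) μs)
    (i : Fin n) (T' : ℝ) (hT' : T ≤ T') (hxi : x T' i ≤ μs / 6) :
    (∀ t ≥ T', x t i = x T' i * Real.exp (-γ * (t - T'))) ∧
    Tendsto (fun t => x t i) atTop (nhds 0) := by
  classical
  have hT'0 : (0:ℝ) ≤ T' := hT.trans hT'
  -- basic facts about muFun
  have hμlow : ∀ t : ℝ, 0 ≤ t → μs / 2 < muFun α₀ β μs t := by
    intro t ht
    have h1 : (0:ℝ) < (t+1) ^ β := Real.rpow_pos_of_pos (by linarith) β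
    have h2 := div_pos hα₀ h1
    unfold muFun; linarith
  have hμcont : ∀ t : ℝ, 0 ≤ t → ContinuousAt (muFun α₀ β μs) t := by
    intro t ht
    have h1 : ContinuousAt (fun s : ℝ => (s+1) ^ β) t := by
      have := Real.continuousAt_rpow_const (t+1) β (Or.inl (by positivity))
      exact ContinuousAt.comp (by simpa using this)
        ((continuous_id.add continuous_const).continuousAt)
    have h2 : (t+1) ^ β ≠ 0 := ne_of_gt (Real.rpow_pos_of_pos (by linarith) β)
    unfold muFun
    exact ((continuousAt_const.div h1 h2).add continuousAt_const).div_const 2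
  have hμhigh : ∀ t : ℝ, T' ≤ t → muFun α₀ β μs t ≤ μs := by
    intro t ht
    rcases eq_or_lt_of_le (hT'.trans ht) with h | h
    · -- t = T : take the limit from the right
      have hc : Tendsto (muFun α₀ β μs) (𝓝[>] t) (𝓝 (muFun α₀ β μs t)) :=
        ((hμcont t (hT'0.trans ht)).tendsto).mono_left nhdsWithin_le_nhds
      have hev : ∀ᶠ s in 𝓝[>] t, muFun α₀ β μs s ≤ μs := by
        filter_upwards [self_mem_nhdsWithin] with s hs
        exact (hμT s (h ▸ hs)).2.le
      exact le_of_tendsto hc hev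
    · exact (hμT t h).2.le
  -- continuity and coordinate derivative of x
  have hxc : ContinuousOn (fun t => x t i) (Ici (0:ℝ)) := by
    have hxcont : ContinuousOn x (Ici (0:ℝ)) := fun t ht => (hder t ht).continuousWithinAt
    exact ((EuclideanSpace.proj i (𝕜 := ℝ)).continuous.comp_continuousOn hxcont)
  have hderi : ∀ t ∈ Ici (0:ℝ), HasDerivWithinAt (fun s => x s i) (x' t i) (Ici 0) t := by
    intro t ht
    have := (EuclideanSpace.proj i (𝕜 := ℝ)).hasFDerivAt.comp_hasDerivWithinAt t (hder t ht)
    exact this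
  -- coordinate bounds
  have hxbd : ∀ t : ℝ, 0 ≤ t → 0 ≤ x t i ∧ x t i ≤ v i := by
    intro t ht
    have := hxX t ht; rw [hX] at this; exact this i
  -- key derivative formula
  have hkey : ∀ t : ℝ, T' ≤ t → x t i < muFun α₀ β μs t / 3 → x' t i = -γ * x t i := by
    intro t ht hlt
    have ht0 : (0:ℝ) ≤ t := hT'0.trans ht
    set μ := muFun α₀ β μs t with hμdef
    have hμpos : 0 < μ := lt_trans (by linarith) (hμlow t ht0)
    have hμle : μ ≤ μs := hμhigh t ht
    set z : EuclideanSpace ℝ (Fin n) := x t - f' (x t) - lam • gradPhi (x t) μ with hzdef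
    have hzi : z i = x t i - f' (x t) i - lam * (3 / (2 * μ)) := by
      have h1 : z i = x t i - f' (x t) i - lam * phiS (x t i) μ := by
        simp [hzdef, gradPhi]
      rw [h1, phiS, if_pos hlt]
    have hxtX := hxX t ht0
    have hbd := hxbd t ht0
    have hvsup : x t i ≤ ⨆ j, v j :=
      le_trans hbd.2 (le_ciSup (Set.Finite.bddAbove (Set.finite_range v)) i)
    have hfi : |f' (x t) i| ≤ Lf := hLf (x t) hxtX i
    have hfi' := abs_le.mp hfi
    have hzneg : z i ≤ 0 := by
      set c := (⨆ j, v j) + Lf with hcdef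
      have hc : 0 < c := by
        have : (0:ℝ) ≤ ⨆ j, v j := le_trans hbd.1 hvsup
        linarith
      have hA := hA1.2.1
      have h3 : μs * (2 * c) < 3 * lam := by
        rw [lt_div_iff₀ (by positivity)] at hA
        linarith
      have h1 : x t i - f' (x t) i ≤ c := by
        simp only [hcdef]; linarith [hfi'.1]
      have h4 : c * (2 * μ) < 3 * lam := by nlinarith
      have h5 : c ≤ lam * (3 / (2 * μ)) := by
        have he : lam * (3 / (2 * μ)) = 3 * lam / (2 * μ) := by ring
        rw [he, le_div_iff₀ (by positivity)]
        linarith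
      rw [hzi]; linarith
    have hPzi : P z i = 0 := proj_zero' v hv X hX P hP z i hzneg
    have hx' := hode t ht0
    have hcomp : x' t i = γ * (P z i - x t i) := by
      rw [hx']
      rfl
    rw [hcomp, hPzi]; ring
  -- the auxiliary function Y
  set c := x T' i with hcdef
  have hc0 : 0 ≤ c := (hxbd T' hT'0).1
  set Y : ℝ → ℝ := fun t => x t i * Real.exp (γ * (t - T')) with hYdef
  have hYc : ContinuousOn Y (Ici (0:ℝ)) := by
    apply hxc.mul
    exact (Real.continuous_exp.comp (continuous_const.mul (continuous_id.sub continuous_const))).continuousOn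
  -- Y is constant on Ici T'
  have hIci : Ici T' ⊆ Ici (0:ℝ) := Ici_subset_Ici.mpr hT'0
  haveI : PreconnectedSpace (Ici T') := Subtype.preconnectedSpace isPreconnected_Ici
  set A : Set (Ici T') := {t | Y ↑t = c} with hAdef
  have hAclosed : IsClosed A := by
    have hcy : Continuous fun t : Ici T' => Y ↑t := (hYc.mono hIci).restrict
    exact isClosed_eq hcy continuous_const
  have hAopen : IsOpen A := by
    rw [isOpen_iff_mem_nhds]
    intro a ha
    have ht₀ : T' ≤ (a:ℝ) := a.2
    have ht₀0 : (0:ℝ) ≤ (a:ℝ) := hT'0.trans ht₀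
    have hYa : Y ↑a = c := ha
    have hxa : x ↑a i ≤ μs / 6 := by
      have hE : 1 ≤ Real.exp (γ * ((a:ℝ) - T')) := by
        rw [Real.one_le_exp_iff]
        have := sub_nonneg.mpr ht₀
        positivity
      have hxa0 : 0 ≤ x ↑a i := (hxbd _ ht₀0).1
      have : x ↑a i ≤ Y ↑a := by
        have := mul_le_mul_of_nonneg_left hE hxa0
        simpa [hYdef] using this
      calc x ↑a i ≤ Y ↑a := this
        _ = c := hYa
        _ ≤ μs / 6 := hcdef ▸ hxi
    have hlt : x ↑a i < muFun α₀ β μs ↑a / 3 := by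
      have := hμlow ↑a ht₀0
      linarith
    -- find a ball where x s i < μ(s)/3
    have hg : ContinuousWithinAt (fun s => muFun α₀ β μs s / 3 - x s i) (Ici T') (a:ℝ) := by
      refine ContinuousWithinAt.sub ?_ ?_
      · exact ((hμcont ↑a ht₀0).continuousWithinAt).div_const 3
      · exact (hxc.mono hIci) _ (mem_Ici.mpr ht₀)
    have hev : ∀ᶠ s in 𝓝[Ici T'] (a:ℝ), 0 < muFun α₀ β μs s / 3 - x s i :=
      hg.eventually_const_lt (by linarith)
    rw [Filter.eventually_iff, Metric.mem_nhdsWithin_iff] at hev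
    obtain ⟨ε, hε, hball⟩ := hev
    set I : Set ℝ := Metric.ball (a:ℝ) ε ∩ Ici T' with hIdef
    have hIconv : Convex ℝ I := (convex_ball _ _).inter (convex_Ici _)
    have haI : (a:ℝ) ∈ I := ⟨Metric.mem_ball_self hε, ht₀⟩
    have hI0 : I ⊆ Ici (0:ℝ) := fun s hs => hT'0.trans hs.2
    have hder0 : ∀ s ∈ I, HasDerivWithinAt Y 0 I s := by
      intro s hs
      have hs0 : (0:ℝ) ≤ s := hI0 hs
      have hlts : x s i < muFun α₀ β μs s / 3 := by
        have := hball hs; simp only [mem_setOf_eq] at this; linarith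
      have hx's := hkey s hs.2 hlts
      have hd1 : HasDerivWithinAt (fun u => x u i) (x' s i) I s :=
        (hderi s hs0).mono hI0
      have hexp : HasDerivAt (fun u : ℝ => Real.exp (γ * (u - T')))
          (γ * Real.exp (γ * (s - T'))) s := by
        have h := ((hasDerivAt_id s).sub_const T').const_mul γ
        simpa [mul_comm] using h.exp
      have hmul := hd1.mul hexp.hasDerivWithinAt
      have hzero : x' s i * Real.exp (γ * (s - T')) + x s i * (γ * Real.exp (γ * (s - T'))) = 0 := by
        rw [hx's]; ring
      rw [hzero] at hmul
      exact hmul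
    have hconst : ∀ s ∈ I, Y s = c := by
      intro s hs
      have := hIconv.norm_image_sub_le_of_norm_hasDerivWithin_le (f' := fun _ => (0:ℝ)) (C := 0) hder0
        (fun u hu => by simp) haI hs
      have h0 : ‖Y s - Y ↑a‖ ≤ 0 := by simpa using this
      have : Y s = Y ↑a := by
        have := norm_le_zero_iff.mp h0
        linarith [sub_eq_zero.mp this]
      rw [this, hYa]
    rw [mem_nhds_subtype]
    refine ⟨Metric.ball (a:ℝ) ε, Metric.ball_mem_nhds _ hε, ?_⟩
    intro b hb
    exact hconst ↑b ⟨hb, b.2⟩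
  have hAall : ∀ t : ℝ, T' ≤ t → Y t = c := by
    have hne : A ≠ ∅ := by
      intro h
      have : (⟨T', le_refl T'⟩ : Ici T') ∈ A := by
        simp only [hAdef, mem_setOf_eq, hYdef]
        simp [hcdef]
      rw [h] at this; exact this
    have := (isClopen_iff.mp ⟨hAclosed, hAopen⟩).resolve_left hne
    intro t ht
    have : (⟨t, ht⟩ : Ici T') ∈ A := this ▸ mem_univ _
    exact this
  have hform : ∀ t ≥ T', x t i = c * Real.exp (-γ * (t - T')) := by
    intro t ht
    have hYt := hAall t ht
    have hE := Real.exp_pos (γ * (t - T'))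
    have h1 : x t i * Real.exp (γ * (t - T')) = c := hYt
    have h2 : Real.exp (-γ * (t - T')) = (Real.exp (γ * (t - T')))⁻¹ := by
      rw [← Real.exp_neg]; ring_nf
    rw [h2, ← h1]
    field_simp
  refine ⟨hform, ?_⟩
  have hlim : Tendsto (fun t : ℝ => c * Real.exp (-γ * (t - T'))) atTop (𝓝 0) := by
    have h1 : Tendsto (fun t : ℝ => t - T') atTop atTop :=
      tendsto_atTop_add_const_right _ (-T') tendsto_id
    have h2 : Tendsto (fun t : ℝ => γ * (t - T')) atTop atTop := h1.const_mul_atTop hγ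
    have h3 : Tendsto (fun t : ℝ => -γ * (t - T')) atTop atBot := by
      simpa [neg_mul] using tendsto_neg_atBot_iff.mpr h2
    have h4 := (Real.tendsto_exp_atBot).comp h3
    simpa using h4.const_mul c
  refine Tendsto.congr' ?_ hlim
  filter_upwards [eventually_ge_atTop T'] with t ht
  exact (hform t ht).symm
end

section
/- Let x : [0,+∞) → ℝⁿ be the solution of the network (NN) with initial point x₀ ∈ X, and suppose Assumption 1 holds. Then every accumulation point x̄ of x(·) satisfies: for each i ∈ {1,…,n}, either x̄_i = 0 or x̄_i ≥ μ*/6; consequently I(x̄) = {i : x̄_i = 0}. Moreover, any two accumulation points x̂ and x̃ of x(·) satisfy I(x̂) = I(x̃). -/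
open Filter Set
open scoped NNReal

lemma proj_coord_zero {n : ℕ} (v : EuclideanSpace ℝ (Fin n)) (hv : ∀ i, 0 ≤ v i)
    (X : Set (EuclideanSpace ℝ (Fin n)))
    (hX : X = {x : EuclideanSpace ℝ (Fin n) | ∀ i, 0 ≤ x i ∧ x i ≤ v i})
    (P : EuclideanSpace ℝ (Fin n) → EuclideanSpace ℝ (Fin n))
    (hP : ∀ z, P z ∈ X ∧ ∀ y ∈ X, ‖z - P z‖ ≤ ‖z - y‖)
    (z : EuclideanSpace ℝ (Fin n)) (i : Fin n) (hzi : z i ≤ 0) :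
    P z i = 0 := by
  classical
  obtain ⟨hmem, hmin⟩ := hP z
  rw [hX] at hmem
  set p := P z with hp
  let q : EuclideanSpace ℝ (Fin n) := WithLp.toLp 2 (fun j => if j = i then 0 else p j)
  have hqdef : ∀ j, q j = if j = i then 0 else p j := fun j => rfl
  have hqX : q ∈ X := by
    rw [hX]
    intro j
    show 0 ≤ q j ∧ q j ≤ v j
    by_cases h : j = i
    · rw [hqdef, if_pos h, h]; exact ⟨le_refl 0, hv i⟩
    · rw [hqdef, if_neg h]; exact hmem j
  have hle := hmin q hqX
  have hsq : ∀ w : EuclideanSpace ℝ (Fin n), ‖w‖ ^ 2 = ∑ j, (w j) ^ 2 := by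
    intro w
    rw [EuclideanSpace.norm_eq, Real.sq_sqrt (by positivity)]
    simp [Real.norm_eq_abs, sq_abs]
  have h2 : ‖z - p‖ ^ 2 ≤ ‖z - q‖ ^ 2 := pow_le_pow_left₀ (norm_nonneg _) hle 2
  rw [hsq, hsq] at h2
  have happ : ∀ j, (z - p) j = z j - p j := fun j => rfl
  have happ' : ∀ j, (z - q) j = z j - q j := fun j => rfl
  have hterm : (z i - p i) ^ 2 ≤ (z i) ^ 2 := by
    have e1 : ∑ j, ((z - p) j) ^ 2
        = ∑ j ∈ Finset.univ.erase i, ((z - p) j) ^ 2 + (z i - p i) ^ 2 := by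
      rw [← happ i]; exact (Finset.sum_erase_add _ _ (Finset.mem_univ i)).symm
    have e2 : ∑ j, ((z - q) j) ^ 2
        = ∑ j ∈ Finset.univ.erase i, ((z - p) j) ^ 2 + (z i) ^ 2 := by
      rw [← (Finset.sum_erase_add _ _ (Finset.mem_univ i))]
      congr 1
      · exact Finset.sum_congr rfl fun j hj => by
          rw [happ, happ']
          have hne : j ≠ i := Finset.ne_of_mem_erase hj
          rw [hqdef, if_neg hne]
      · rw [happ', hqdef, if_pos rfl]; ring
    rw [e1, e2] at h2
    linarith
  have hp0 : 0 ≤ p i := (hmem i).1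
  have : p i ≤ 0 := by nlinarith [mul_nonpos_of_nonpos_of_nonneg hzi hp0]
  linarith [le_antisymm this hp0]

theorem stmt10 {n : ℕ}
    (v : EuclideanSpace ℝ (Fin n)) (hv : ∀ i, 0 ≤ v i)
    (X : Set (EuclideanSpace ℝ (Fin n)))
    (hX : X = {x : EuclideanSpace ℝ (Fin n) | ∀ i, 0 ≤ x i ∧ x i ≤ v i})
    (f : EuclideanSpace ℝ (Fin n) → ℝ)
    (f' : EuclideanSpace ℝ (Fin n) → EuclideanSpace ℝ (Fin n))
    (hf : ∀ y, HasGradientAt f (f' y) y)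
    (hconv : ConvexOn ℝ univ f)
    (hlip : LocallyLipschitz f')
    (lam γ α₀ β μs : ℝ)
    (hlam : 0 < lam) (hγ : 0 < γ) (hα₀ : 0 < α₀) (hβ : 0 < β) (hμs : 0 < μs)
    (P : EuclideanSpace ℝ (Fin n) → EuclideanSpace ℝ (Fin n))
    (hP : ∀ z, P z ∈ X ∧ ∀ y ∈ X, ‖z - P z‖ ≤ ‖z - y‖)
    (x₀ : EuclideanSpace ℝ (Fin n)) (hx₀ : x₀ ∈ X)
    (x x' : ℝ → EuclideanSpace ℝ (Fin n))
    (hx0 : x 0 = x₀)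
    (hder : ∀ t ∈ Ici (0 : ℝ), HasDerivWithinAt x (x' t) (Ici 0) t)
    (hode : ∀ t ∈ Ici (0 : ℝ),
      x' t = γ • (P (x t - f' (x t) - lam • gradPhi (x t) (muFun α₀ β μs t)) - x t))
    (hx'c : ContinuousOn x' (Ici 0))
    (hxX : ∀ t ∈ Ici (0 : ℝ), x t ∈ X)
    (hn : 0 < n)
    (Lf : ℝ) (hLf0 : 0 < Lf) (hLf : ∀ y ∈ X, ∀ i, |f' y i| ≤ Lf)
    (hA1 : (∀ i, v i ≠ 0 → μs < v i) ∧
      μs < 3 * lam / (2 * ((⨆ i, v i) + Lf)) ∧ μs < 2 * lam / (n * Lf))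
    :
    (∀ xbar : EuclideanSpace ℝ (Fin n),
      (∃ u : ℕ → ℝ, Tendsto u atTop atTop ∧ Tendsto (fun k => x (u k)) atTop (nhds xbar)) →
      (∀ i, xbar i = 0 ∨ μs / 6 ≤ xbar i) ∧
      {i | 0 ≤ xbar i ∧ xbar i < μs / 6} = {i | xbar i = 0}) ∧
    (∀ xhat xtil : EuclideanSpace ℝ (Fin n),
      (∃ u : ℕ → ℝ, Tendsto u atTop atTop ∧ Tendsto (fun k => x (u k)) atTop (nhds xhat)) →
      (∃ u : ℕ → ℝ, Tendsto u atTop atTop ∧ Tendsto (fun k => x (u k)) atTop (nhds xtil)) →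
      {i | 0 ≤ xhat i ∧ xhat i < μs / 6} = {i | 0 ≤ xtil i ∧ xtil i < μs / 6}) := by
  classical
  have hbdd : BddAbove (Set.range v) := (Set.finite_range v).bddAbove
  have hvb : ∀ i, v i ≤ ⨆ j, v j := fun i => le_ciSup hbdd i
  obtain ⟨hA1a, hA1b, hA1c⟩ := hA1
  have hvb0 : (0:ℝ) ≤ ⨆ j, v j := le_trans (hv ⟨0, hn⟩) (hvb ⟨0, hn⟩)
  have hvbLf : (0:ℝ) < (⨆ j, v j) + Lf := by linarith
  -- choose T0
  have hpowtop : Tendsto (fun t : ℝ => (t + 1) ^ β) atTop atTop :=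
    (tendsto_rpow_atTop hβ).comp (tendsto_atTop_add_const_right atTop 1 tendsto_id)
  have hq0 : Tendsto (fun t : ℝ => α₀ / (t + 1) ^ β) atTop (nhds 0) :=
    tendsto_const_nhds.div_atTop hpowtop
  obtain ⟨T0, hT0⟩ : ∃ T0 : ℝ, ∀ t ≥ T0, 1 ≤ t ∧ α₀ / (t + 1) ^ β < μs :=
    eventually_atTop.1 ((eventually_ge_atTop (1:ℝ)).and (hq0.eventually_lt_const hμs))
  have hT0one : (1:ℝ) ≤ T0 := (hT0 T0 le_rfl).1
  have hT0pos : (0:ℝ) < T0 := by linarith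
  -- basics
  have hxmem : ∀ t : ℝ, 0 ≤ t → ∀ i, 0 ≤ x t i ∧ x t i ≤ v i := by
    intro t ht i
    have := hxX t ht
    rw [hX] at this
    exact this i
  have hxcont : ContinuousOn x (Ici 0) := fun t ht => (hder t ht).continuousWithinAt
  have hxic : ∀ i : Fin n, ContinuousOn (fun s => x s i) (Ici (0:ℝ)) := fun i =>
    (EuclideanSpace.proj (𝕜 := ℝ) i).continuous.comp_continuousOn hxcont
  -- the coordinate ODE in the small region
  have hODE : ∀ (i : Fin n) (r : ℝ), T0 ≤ r → x r i < μs / 6 →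
      HasDerivAt (fun s => x s i) (-(γ * x r i)) r := by
    intro i r hr hreg6
    obtain ⟨hr1, hrsm⟩ := hT0 r hr
    have hr0 : (0:ℝ) < r := by linarith
    have hrI : r ∈ Ici (0:ℝ) := le_of_lt hr0
    have hpow : (0:ℝ) < (r + 1) ^ β := Real.rpow_pos_of_pos (by linarith) β
    have hqpos : 0 < α₀ / (r + 1) ^ β := div_pos hα₀ hpow
    set μ := muFun α₀ β μs r with hμ
    have hμdef : μ = (α₀ / (r + 1) ^ β + μs) / 2 := rfl
    have hμlo : μs / 2 < μ := by rw [hμdef]; linarith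
    have hμhi : μ < μs := by rw [hμdef]; linarith
    have hμ0 : 0 < μ := by linarith
    have hreg : x r i < μ / 3 := by linarith
    set z := x r - f' (x r) - lam • gradPhi (x r) μ with hz
    have hzi : z i ≤ 0 := by
      have hzieq : z i = x r i - f' (x r) i - lam * phiS (x r i) μ := by
        rw [hz]; simp [gradPhi]
      rw [hzieq, phiS, if_pos hreg]
      have hfb : |f' (x r) i| ≤ Lf := hLf (x r) (hxX r hrI) i
      have hfb' : -(f' (x r) i) ≤ Lf := by
        rcases abs_le.1 hfb with ⟨h1, _⟩; linarith
      have hxv : x r i ≤ ⨆ j, v j := le_trans (hxmem r hrI i).2 (hvb i)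
      have hmul : μs * (2 * ((⨆ j, v j) + Lf)) < 3 * lam := by
        rw [lt_div_iff₀ (by positivity)] at hA1b
        linarith
      have hkey : (⨆ j, v j) + Lf ≤ lam * (3 / (2 * μ)) := by
        have heq : lam * (3 / (2 * μ)) = 3 * lam / (2 * μ) := by ring
        rw [heq, le_div_iff₀ (by positivity)]
        nlinarith
      linarith
    have hPzi : P z i = 0 := proj_coord_zero v hv X hX P hP z i hzi
    have hD : HasDerivAt x (x' r) r := (hder r hrI).hasDerivAt (Ici_mem_nhds hr0)
    have hDi : HasDerivAt (fun s => x s i) (x' r i) r := by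
      have := (EuclideanSpace.proj (𝕜 := ℝ) i).hasFDerivAt.comp_hasDerivAt r hD
      exact this
    have hxi' : x' r i = -(γ * x r i) := by
      have hoder := hode r hrI
      have h2 : x' r i = γ * (P z i - x r i) := by rw [hoder]; rfl
      rw [h2, hPzi]; ring
    rw [hxi'] at hDi
    exact hDi
  -- invariance of the region
  have hinv : ∀ (i : Fin n) (t : ℝ), T0 ≤ t → x t i < μs / 6 →
      ∀ s, t ≤ s → x s i < μs / 6 := by
    intro i t ht hlt
    by_contra hcon
    push_neg at hcon
    obtain ⟨s1, hs1t, hs1⟩ := hcon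
    set S : Set ℝ := {s | t ≤ s ∧ μs / 6 ≤ x s i} with hS
    have hSne : S.Nonempty := ⟨s1, hs1t, hs1⟩
    have hSbdd : BddBelow S := ⟨t, fun s hs => hs.1⟩
    have ht0 : (0:ℝ) < t := lt_of_lt_of_le hT0pos ht
    have hcontt : ContinuousOn (fun s => x s i) (Ici t) :=
      (hxic i).mono (Ici_subset_Ici.2 (le_of_lt ht0))
    have hScl : IsClosed S := by
      have hSeq : S = Ici t ∩ (fun s => x s i) ⁻¹' (Ici (μs / 6)) := by
        ext s; simp [hS, Set.mem_setOf_eq, and_comm]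
      rw [hSeq]
      exact hcontt.preimage_isClosed_of_isClosed isClosed_Ici isClosed_Ici
    set s₀ := sInf S with hs₀def
    have hs₀S : s₀ ∈ S := hScl.csInf_mem hSne hSbdd
    have hts₀ : t ≤ s₀ := le_csInf hSne fun s hs => hs.1
    have htlt : t < s₀ := by
      rcases lt_or_eq_of_le hts₀ with h | h
      · exact h
      · exfalso; rw [← h] at hs₀S; linarith [hs₀S.2]
    have hIco : ∀ r ∈ Ico t s₀, x r i < μs / 6 := by
      intro r hr
      by_contra h
      push_neg at h
      have : r ∈ S := ⟨hr.1, h⟩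
      exact absurd (csInf_le hSbdd this) (not_le.2 hr.2)
    have hanti : AntitoneOn (fun s => x s i) (Icc t s₀) := by
      apply antitoneOn_of_deriv_nonpos (convex_Icc t s₀)
      · exact hcontt.mono fun r hr => hr.1
      · intro r hr
        rw [interior_Icc] at hr
        exact (hODE i r (le_trans ht (le_of_lt hr.1))
          (hIco r ⟨le_of_lt hr.1, hr.2⟩)).differentiableAt.differentiableWithinAt
      · intro r hr
        rw [interior_Icc] at hr
        have h := hODE i r (le_trans ht (le_of_lt hr.1)) (hIco r ⟨le_of_lt hr.1, hr.2⟩)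
        rw [h.deriv]
        have hnn : 0 ≤ x r i := (hxmem r (le_trans (le_of_lt ht0) (le_of_lt hr.1)) i).1
        have := mul_nonneg (le_of_lt hγ) hnn
        linarith
    have hfin : x s₀ i ≤ x t i :=
      hanti (left_mem_Icc.2 hts₀) (right_mem_Icc.2 hts₀) hts₀
    linarith [hs₀S.2]
  -- exponential decay
  have hdecay : ∀ (i : Fin n) (t : ℝ), T0 ≤ t → x t i < μs / 6 →
      Tendsto (fun s => x s i) atTop (nhds 0) := by
    intro i t ht hlt
    have ht0 : (0:ℝ) < t := lt_of_lt_of_le hT0pos ht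
    set g : ℝ → ℝ := fun r => x r i * Real.exp (γ * r) with hg
    have hconst : ∀ s, t ≤ s → g s = g t := by
      intro s hs
      have hgc : ContinuousOn g (Icc t s) :=
        (((hxic i).mono fun r hr => le_trans (le_of_lt ht0) hr.1).mul
          ((Real.continuous_exp.comp (continuous_const.mul continuous_id)).continuousOn))
      have hgd : ∀ r ∈ interior (Icc t s), HasDerivAt g 0 r := by
        intro r hr
        rw [interior_Icc] at hr
        have hrT : T0 ≤ r := le_trans ht (le_of_lt hr.1)
        have hregr : x r i < μs / 6 := hinv i t ht hlt r (le_of_lt hr.1)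
        have h1 := hODE i r hrT hregr
        have h3 : HasDerivAt (fun u : ℝ => γ * u) γ r := by
          simpa using (hasDerivAt_id r).const_mul γ
        have h2 : HasDerivAt (fun u : ℝ => Real.exp (γ * u)) (Real.exp (γ * r) * γ) r := by
          exact (Real.hasDerivAt_exp (γ * r)).comp r h3
        have h4 : HasDerivAt g (-(γ * x r i) * Real.exp (γ * r) + x r i * (Real.exp (γ * r) * γ)) r :=
          h1.mul h2
        convert h4 using 1
        ring
      have hmono : MonotoneOn g (Icc t s) :=
        monotoneOn_of_deriv_nonneg (convex_Icc t s) hgc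
          (fun r hr => (hgd r hr).differentiableAt.differentiableWithinAt)
          (fun r hr => by rw [(hgd r hr).deriv])
      have hanti : AntitoneOn g (Icc t s) :=
        antitoneOn_of_deriv_nonpos (convex_Icc t s) hgc
          (fun r hr => (hgd r hr).differentiableAt.differentiableWithinAt)
          (fun r hr => by rw [(hgd r hr).deriv])
      have hmem1 : t ∈ Icc t s := left_mem_Icc.2 hs
      have hmem2 : s ∈ Icc t s := right_mem_Icc.2 hs
      exact le_antisymm (hanti hmem1 hmem2 hs) (hmono hmem1 hmem2 hs)
    have hform : ∀ s, t ≤ s → x s i = g t * Real.exp (-(γ * s)) := by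
      intro s hs
      have h := hconst s hs
      have he : Real.exp (γ * s) ≠ 0 := Real.exp_ne_zero _
      rw [Real.exp_neg, eq_mul_inv_iff_mul_eq₀ he]
      exact h
    have hC : Tendsto (fun s : ℝ => g t * Real.exp (-(γ * s))) atTop (nhds 0) := by
      have h1 : Tendsto (fun s : ℝ => γ * s) atTop atTop :=
        tendsto_id.const_mul_atTop hγ
      have h2 : Tendsto (fun s : ℝ => -(γ * s)) atTop atBot :=
        tendsto_neg_atTop_atBot.comp h1
      have h3 := Real.tendsto_exp_atBot.comp h2
      have h4 := h3.const_mul (g t)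
      simpa [Function.comp] using h4
    exact hC.congr' ((eventually_ge_atTop t).mono fun s hs => (hform s hs).symm)
  -- characterization of accumulation points
  have hchar : ∀ xb : EuclideanSpace ℝ (Fin n),
      (∃ u : ℕ → ℝ, Tendsto u atTop atTop ∧ Tendsto (fun k => x (u k)) atTop (nhds xb)) →
      (∀ i, 0 ≤ xb i) ∧
      (∀ i : Fin n, xb i < μs / 6 → ∃ t, T0 ≤ t ∧ x t i < μs / 6) ∧
      (∀ i : Fin n, (∃ t, T0 ≤ t ∧ x t i < μs / 6) → xb i = 0) := by
    rintro xb ⟨u, hu1, hu2⟩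
    have htl : ∀ i : Fin n, Tendsto (fun k => x (u k) i) atTop (nhds (xb i)) := fun i =>
      ((EuclideanSpace.proj (𝕜 := ℝ) i).continuous.tendsto xb).comp hu2
    refine ⟨?_, ?_, ?_⟩
    · intro i
      exact ge_of_tendsto (htl i)
        ((hu1.eventually_ge_atTop 0).mono fun k hk => (hxmem (u k) hk i).1)
    · intro i hlt
      obtain ⟨k, hk1, hk2⟩ :=
        ((hu1.eventually_ge_atTop T0).and ((htl i).eventually_lt_const hlt)).exists
      exact ⟨u k, hk1, hk2⟩
    · rintro i ⟨t, ht1, ht2⟩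
      have hz := (hdecay i t ht1 ht2).comp hu1
      exact tendsto_nhds_unique (htl i) hz
  constructor
  · intro xb hxb
    obtain ⟨hnn, hfw, hbw⟩ := hchar xb hxb
    have hz : ∀ i : Fin n, xb i < μs / 6 → xb i = 0 := fun i h => hbw i (hfw i h)
    constructor
    · intro i
      rcases lt_or_ge (xb i) (μs / 6) with h | h
      · exact Or.inl (hz i h)
      · exact Or.inr h
    · ext i
      simp only [Set.mem_setOf_eq]
      constructor
      · rintro ⟨_, h⟩; exact hz i h
      · intro h; exact ⟨le_of_eq h.symm, by rw [h]; linarith⟩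
  · intro xh xt h1 h2
    obtain ⟨hnn1, hfw1, hbw1⟩ := hchar xh h1
    obtain ⟨hnn2, hfw2, hbw2⟩ := hchar xt h2
    ext i
    simp only [Set.mem_setOf_eq]
    constructor
    · rintro ⟨_, h⟩
      have hzz := hbw2 i (hfw1 i h)
      exact ⟨le_of_eq hzz.symm, by rw [hzz]; linarith⟩
    · rintro ⟨_, h⟩
      have hzz := hbw1 i (hfw2 i h)
      exact ⟨le_of_eq hzz.symm, by rw [hzz]; linarith⟩
end

section
/- Let x* ∈ X and let Z(x*) = {i : x*_i = 0} and X_Z(x*) = {y ∈ X : y_i = 0 for all i ∈ Z(x*)}. Then x* is a local minimizer of f(x) + λ‖x‖₀ over X if and only if x* is a local minimizer of f over X_Z(x*). -/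
open Filter Set
open scoped NNReal

open scoped Topology in
lemma norm0_eq_ncard {n : ℕ} (x : EuclideanSpace ℝ (Fin n)) :
    norm0 x = Set.ncard {i | x i ≠ 0} := by
  rw [norm0]
  exact Nat.card_coe_set_eq _

lemma norm0_mono {n : ℕ} {x y : EuclideanSpace ℝ (Fin n)}
    (h : ∀ i, x i ≠ 0 → y i ≠ 0) : norm0 x ≤ norm0 y := by
  rw [norm0_eq_ncard, norm0_eq_ncard]
  exact Set.ncard_le_ncard (fun i hi => h i hi) (Set.toFinite _)

lemma norm0_lt {n : ℕ} {x y : EuclideanSpace ℝ (Fin n)}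
    (h : ∀ i, x i ≠ 0 → y i ≠ 0) (j : Fin n) (hj0 : x j = 0) (hj : y j ≠ 0) :
    norm0 x < norm0 y := by
  rw [norm0_eq_ncard, norm0_eq_ncard]
  refine Set.ncard_lt_ncard ?_ (Set.toFinite _)
  constructor
  · exact fun i hi => h i hi
  · intro hsub
    exact (hsub hj) hj0

open scoped Topology in
theorem stmt12 {n : ℕ} (v : EuclideanSpace ℝ (Fin n)) (hv : ∀ i, 0 ≤ v i)
    (lam : ℝ) (hlam : 0 < lam)
    (f : EuclideanSpace ℝ (Fin n) → ℝ) (hf : Continuous f)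
    (xs : EuclideanSpace ℝ (Fin n))
    (hxs : xs ∈ {x : EuclideanSpace ℝ (Fin n) | ∀ i, 0 ≤ x i ∧ x i ≤ v i}) :
    IsLocalMinOn (fun x => f x + lam * (norm0 x : ℝ))
      {x : EuclideanSpace ℝ (Fin n) | ∀ i, 0 ≤ x i ∧ x i ≤ v i} xs ↔
    IsLocalMinOn f
      {x : EuclideanSpace ℝ (Fin n) |
        (∀ i, 0 ≤ x i ∧ x i ≤ v i) ∧ ∀ i, xs i = 0 → x i = 0} xs := by
  constructor
  · intro h
    have hsub : {x : EuclideanSpace ℝ (Fin n) |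
        (∀ i, 0 ≤ x i ∧ x i ≤ v i) ∧ ∀ i, xs i = 0 → x i = 0} ⊆
        {x : EuclideanSpace ℝ (Fin n) | ∀ i, 0 ≤ x i ∧ x i ≤ v i} := fun x hx => hx.1
    have h' := h.filter_mono (nhdsWithin_mono xs hsub)
    filter_upwards [h', self_mem_nhdsWithin] with x hx hxZ
    have hn : norm0 x ≤ norm0 xs :=
      norm0_mono (fun i hi h0 => hi (hxZ.2 i h0))
    have hn' : lam * (norm0 x : ℝ) ≤ lam * (norm0 xs : ℝ) :=
      mul_le_mul_of_nonneg_left (by exact_mod_cast hn) hlam.le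
    linarith
  · intro h
    rw [IsLocalMinOn, IsMinFilter] at h
    rw [eventually_iff, Metric.mem_nhdsWithin_iff] at h
    obtain ⟨δ, hδpos, hδ⟩ := h
    have hev1 : ∀ᶠ x in 𝓝 xs, dist (f x) (f xs) < lam :=
      Metric.tendsto_nhds.mp (hf.tendsto xs) lam hlam
    have hev2 : ∀ᶠ x in 𝓝 xs, ∀ i, xs i ≠ 0 → x i ≠ 0 := by
      rw [eventually_all]
      intro i
      by_cases hi : xs i = 0
      · filter_upwards with x hne
        exact absurd hi hne
      · have hc : Continuous fun x : EuclideanSpace ℝ (Fin n) => x i :=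
          (EuclideanSpace.proj (𝕜 := ℝ) i).continuous
        have := (hc.tendsto xs) (IsOpen.mem_nhds isOpen_ne hi)
        filter_upwards [this] with x hx _
        exact hx
    have hev3 : ∀ᶠ x in 𝓝 xs, dist x xs < δ :=
      Metric.eventually_nhds_iff_ball.mpr ⟨δ, hδpos, fun y hy => hy⟩
    rw [IsLocalMinOn, IsMinFilter]
    filter_upwards [eventually_nhdsWithin_of_eventually_nhds hev1,
      eventually_nhdsWithin_of_eventually_nhds hev2,
      eventually_nhdsWithin_of_eventually_nhds hev3,
      self_mem_nhdsWithin] with x h1 h2 h3 hX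
    have hnle : norm0 xs ≤ norm0 x := norm0_mono h2
    by_cases hc : ∀ i, xs i = 0 → x i = 0
    · have hfle : f xs ≤ f x := hδ ⟨Metric.mem_ball.mpr h3, ⟨hX, hc⟩⟩
      have : lam * (norm0 xs : ℝ) ≤ lam * (norm0 x : ℝ) :=
        mul_le_mul_of_nonneg_left (by exact_mod_cast hnle) hlam.le
      linarith
    · push_neg at hc
      obtain ⟨j, hj0, hjne⟩ := hc
      have hlt : norm0 xs < norm0 x := norm0_lt h2 j hj0 hjne
      have hcast : (norm0 xs : ℝ) + 1 ≤ (norm0 x : ℝ) := by exact_mod_cast hlt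
      have habs : |f x - f xs| < lam := by rwa [Real.dist_eq] at h1
      have h1' : -lam < f x - f xs := (abs_lt.mp habs).1
      have : lam * ((norm0 xs : ℝ) + 1) ≤ lam * (norm0 x : ℝ) :=
        mul_le_mul_of_nonneg_left hcast hlam.le
      nlinarith
end

section
/- Let x̄ ∈ X, μ* > 0, and let x̄^{μ*} be the μ*-update point of x̄. Then x̄^{μ*} is a strict local minimizer of f(x) + λ‖x‖₀ over X_K(x̄): there exists δ > 0 such that f(x̄^{μ*}) + λ‖x̄^{μ*}‖₀ < f(x) + λ‖x‖₀ for every x ∈ X_K(x̄) with x ≠ x̄^{μ*} and ‖x − x̄^{μ*}‖ < δ. -/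
open Filter Set
open scoped NNReal

theorem stmt16 {n : ℕ} (v : EuclideanSpace ℝ (Fin n)) (hv : ∀ i, 0 ≤ v i)
    (lam μs : ℝ) (hlam : 0 < lam) (hμs : 0 < μs)
    (f : EuclideanSpace ℝ (Fin n) → ℝ) (hf : Continuous f)
    (xbar : EuclideanSpace ℝ (Fin n))
    (hxbar : xbar ∈ {x : EuclideanSpace ℝ (Fin n) | ∀ i, 0 ≤ x i ∧ x i ≤ v i})
    (xup : EuclideanSpace ℝ (Fin n))
    (hxup : ∀ i, xup i = if μs / 2 ≤ |xbar i| then xbar i else 0) :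
    ∃ δ > (0 : ℝ), ∀ y ∈ {y : EuclideanSpace ℝ (Fin n) |
        (∀ i, 0 ≤ y i ∧ y i ≤ v i) ∧
        ∀ i, μs / 2 ≤ xbar i ∧ xbar i ≤ v i → y i = xbar i},
      y ≠ xup → ‖y - xup‖ < δ →
      f xup + lam * (norm0 xup : ℝ) < f y + lam * (norm0 y : ℝ) := by
  obtain ⟨δ, hδ, hδf⟩ := Metric.continuous_iff.mp hf xup lam hlam
  refine ⟨δ, hδ, ?_⟩
  rintro y ⟨hy1, hy2⟩ hne hdist
  -- coordinates where y agrees with xup on K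
  have hagree : ∀ i, μs / 2 ≤ xbar i → y i = xup i := by
    intro i hi
    have h1 : y i = xbar i := hy2 i ⟨hi, (hxbar i).2⟩
    have h2 : xup i = xbar i := by
      rw [hxup i, if_pos]
      rwa [abs_of_nonneg (hxbar i).1]
    rw [h1, h2]
  have hA : ∀ i, xup i ≠ 0 → y i = xup i := by
    intro i hi
    by_cases h : μs / 2 ≤ xbar i
    · exact hagree i h
    · exfalso; apply hi
      rw [hxup i, if_neg]
      rwa [abs_of_nonneg (hxbar i).1]
  -- strict inclusion of supports
  have hcard : norm0 xup + 1 ≤ norm0 y := by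
    classical
    have e1 : norm0 xup = (Finset.univ.filter (fun i => xup i ≠ 0)).card := by
      simp [norm0, Nat.card_eq_fintype_card, Fintype.card_subtype]
    have e2 : norm0 y = (Finset.univ.filter (fun i => y i ≠ 0)).card := by
      simp [norm0, Nat.card_eq_fintype_card, Fintype.card_subtype]
    rw [e1, e2]
    have hsub : Finset.univ.filter (fun i => xup i ≠ 0) ⊂
        Finset.univ.filter (fun i => y i ≠ 0) := by
      constructor
      · intro i hi
        simp only [Finset.mem_filter, Finset.mem_univ, true_and] at hi ⊢
        rw [hA i hi]; exact hi
      · intro hsub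
        obtain ⟨i, hi⟩ : ∃ i, y i ≠ xup i := Function.ne_iff.mp (fun h => hne (PiLp.ext (congrFun h)))
        have hxupz : xup i = 0 := by
          by_cases h : μs / 2 ≤ xbar i
          · exact absurd (hagree i h) hi
          · rw [hxup i, if_neg]
            rwa [abs_of_nonneg (hxbar i).1]
        have hyi : y i ≠ 0 := by rw [hxupz] at hi; exact hi
        have := hsub (by simp [hyi] : i ∈ Finset.univ.filter (fun i => y i ≠ 0))
        simp [hxupz] at this
    exact Finset.card_lt_card hsub
  have hfb : f xup - f y < lam := by
    have := hδf y (by rwa [dist_eq_norm])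
    rw [Real.dist_eq] at this
    have := abs_lt.mp this
    linarith [this.1]
  have : (norm0 xup : ℝ) + 1 ≤ (norm0 y : ℝ) := by exact_mod_cast hcard
  nlinarith
end

section
/- Let x̄ ∈ X, suppose Assumption 1 holds, and let x̄^{μ*} be the μ*-update point of x̄. Then f(x̄^{μ*}) + λ‖x̄^{μ*}‖₀ ≤ f(x̄) + λ‖x̄‖₀; moreover, if J(x̄) ≠ ∅, then f(x̄^{μ*}) + λ‖x̄^{μ*}‖₀ < f(x̄) + λ‖x̄‖₀. -/
open Filter Set
open scoped NNReal

theorem stmt17 {n : ℕ} (v : EuclideanSpace ℝ (Fin n)) (hv : ∀ i, 0 ≤ v i)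
    (X : Set (EuclideanSpace ℝ (Fin n)))
    (hX : X = {x : EuclideanSpace ℝ (Fin n) | ∀ i, 0 ≤ x i ∧ x i ≤ v i})
    (f : EuclideanSpace ℝ (Fin n) → ℝ)
    (f' : EuclideanSpace ℝ (Fin n) → EuclideanSpace ℝ (Fin n))
    (hf : ∀ y, HasGradientAt f (f' y) y)
    (hconv : ConvexOn ℝ univ f)
    (hlip : LocallyLipschitz f')
    (lam μs : ℝ) (hlam : 0 < lam) (hμs : 0 < μs)
    (hn : 0 < n)
    (Lf : ℝ) (hLf0 : 0 < Lf) (hLf : ∀ y ∈ X, ∀ i, |f' y i| ≤ Lf)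
    (hA1 : (∀ i, v i ≠ 0 → μs < v i) ∧
      μs < 3 * lam / (2 * ((⨆ i, v i) + Lf)) ∧ μs < 2 * lam / (n * Lf))
    (xbar : EuclideanSpace ℝ (Fin n)) (hxbar : xbar ∈ X)
    (xup : EuclideanSpace ℝ (Fin n))
    (hxup : ∀ i, xup i = if μs / 2 ≤ |xbar i| then xbar i else 0) :
    f xup + lam * (norm0 xup : ℝ) ≤ f xbar + lam * (norm0 xbar : ℝ) ∧
    ({i | μs / 6 ≤ xbar i ∧ xbar i < μs / 2}.Nonempty →
      f xup + lam * (norm0 xup : ℝ) < f xbar + lam * (norm0 xbar : ℝ)) := by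
  classical
  obtain ⟨hA11, hA12, hA13⟩ := hA1
  subst hX
  have hxb : ∀ i, 0 ≤ xbar i ∧ xbar i ≤ v i := hxbar
  have hxupX : xup ∈ {x : EuclideanSpace ℝ (Fin n) | ∀ i, 0 ≤ x i ∧ x i ≤ v i} := by
    intro i
    rw [hxup i]
    split
    · exact hxb i
    · exact ⟨le_refl 0, hv i⟩
  set S : Finset (Fin n) :=
    Finset.univ.filter (fun i => xbar i ≠ 0 ∧ ¬ (μs / 2 ≤ |xbar i|)) with hS
  -- convexity gradient inequality
  have hkey : f xup - f xbar ≤ ∑ i, f' xup i * (xup i - xbar i) := by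
    set g : ℝ → ℝ := fun t => f (t • (xup - xbar) + xbar) with hg
    have hgconv : ConvexOn ℝ univ g := by
      have h := hconv.comp_affineMap (AffineMap.lineMap xbar xup : ℝ →ᵃ[ℝ] _)
      simpa [hg, Function.comp_def, AffineMap.lineMap_apply, vsub_eq_sub,
        vadd_eq_add] using h
    have hc : HasDerivAt (fun t : ℝ => t • (xup - xbar) + xbar) (xup - xbar) 1 := by
      simpa using ((hasDerivAt_id (1 : ℝ)).smul_const (xup - xbar)).add_const xbar
    have h1 : (1 : ℝ) • (xup - xbar) + xbar = xup := by
      simp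
    have hfd : HasFDerivAt f (InnerProductSpace.toDual ℝ _ (f' xup))
        ((1 : ℝ) • (xup - xbar) + xbar) := by
      rw [h1]; exact (hf xup).hasFDerivAt
    have hgd : HasDerivAt g (∑ i, f' xup i * (xup i - xbar i)) 1 := by
      have h2 := hfd.comp_hasDerivAt (1 : ℝ) hc
      have h3 : InnerProductSpace.toDual ℝ _ (f' xup) (xup - xbar)
          = ∑ i, f' xup i * (xup i - xbar i) := by
        rw [InnerProductSpace.toDual_apply_apply]
        rw [PiLp.inner_apply]
        simp [PiLp.sub_apply, mul_comm]
      rw [h3] at h2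
      exact h2
    have hs := hgconv.slope_le_of_hasDerivAt (mem_univ (0 : ℝ)) (mem_univ (1 : ℝ))
      one_pos hgd
    have hg0 : g 0 = f xbar := by simp [hg]
    have hg1 : g 1 = f xup := by
      rw [show g 1 = f ((1 : ℝ) • (xup - xbar) + xbar) from rfl, h1]
    rw [slope_def_field] at hs
    rw [hg0, hg1] at hs
    simpa using hs
  -- sum is supported on S
  have hzero : ∀ i ∈ Finset.univ, i ∉ S → f' xup i * (xup i - xbar i) = 0 := by
    intro i _ hi
    simp only [hS, Finset.mem_filter, Finset.mem_univ, true_and, not_and, not_not] at hi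
    rw [hxup i]
    by_cases h : μs / 2 ≤ |xbar i|
    · simp [h]
    · have hx0 : xbar i = 0 := by
        by_contra hne
        exact h (hi hne)
      simp [h, hx0]
  have hsum : ∑ i, f' xup i * (xup i - xbar i) = ∑ i ∈ S, f' xup i * (xup i - xbar i) :=
    (Finset.sum_subset (Finset.subset_univ S) hzero).symm
  have hbound : ∑ i ∈ S, f' xup i * (xup i - xbar i) ≤ S.card * (Lf * (μs / 2)) := by
    have h1 : ∀ i ∈ S, f' xup i * (xup i - xbar i) ≤ Lf * (μs / 2) := by
      intro i hi
      simp only [hS, Finset.mem_filter, Finset.mem_univ, true_and] at hi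
      obtain ⟨hne, hlt⟩ := hi
      have hx0 : xup i = 0 := by rw [hxup i, if_neg hlt]
      have hxi : 0 ≤ xbar i := (hxb i).1
      have habs : |xbar i| = xbar i := abs_of_nonneg hxi
      rw [habs] at hlt
      push_neg at hlt
      have hfa := abs_le.mp (hLf xup hxupX i)
      rw [hx0]
      nlinarith [hfa.1, hfa.2]
    calc ∑ i ∈ S, f' xup i * (xup i - xbar i) ≤ ∑ i ∈ S, Lf * (μs / 2) :=
          Finset.sum_le_sum h1
      _ = S.card * (Lf * (μs / 2)) := by rw [Finset.sum_const, nsmul_eq_mul]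
  -- norm0 accounting
  have hcard : ∀ x : EuclideanSpace ℝ (Fin n),
      norm0 x = (Finset.univ.filter (fun i => x i ≠ 0)).card := by
    intro x
    rw [norm0, Nat.card_eq_fintype_card, Fintype.card_subtype]
  have hupfilter : Finset.univ.filter (fun i => xup i ≠ 0)
      = Finset.univ.filter (fun i => xbar i ≠ 0 ∧ μs / 2 ≤ |xbar i|) := by
    apply Finset.filter_congr
    intro i _
    rw [hxup i]
    by_cases h : μs / 2 ≤ |xbar i|
    · simp [h]
    · simp [h]
  have hsplit : norm0 xbar = norm0 xup + S.card := by
    rw [hcard xbar, hcard xup, hupfilter, hS]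
    have h := Finset.card_filter_add_card_filter_not
      (s := Finset.univ.filter (fun i : Fin n => xbar i ≠ 0))
      (fun i => μs / 2 ≤ |xbar i|)
    rw [Finset.filter_filter, Finset.filter_filter] at h
    omega
  -- Lf * μs / 2 < lam
  have hnLf : (0 : ℝ) < (n : ℝ) * Lf := by
    have : (0 : ℝ) < (n : ℝ) := by exact_mod_cast hn
    positivity
  have hmul : μs * ((n : ℝ) * Lf) < 2 * lam := (lt_div_iff₀ hnLf).mp hA13
  have hn1 : (1 : ℝ) ≤ (n : ℝ) := by exact_mod_cast hn
  have hlt : Lf * (μs / 2) < lam := by nlinarith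
  -- combine
  have hmain : f xup - f xbar ≤ (S.card : ℝ) * (Lf * (μs / 2)) := by
    rw [hsum] at hkey; linarith
  have hcardnn : (0 : ℝ) ≤ (S.card : ℝ) := Nat.cast_nonneg _
  constructor
  · rw [hsplit]
    push_cast
    nlinarith [mul_le_mul_of_nonneg_left hlt.le hcardnn]
  · intro ⟨i, hi1, hi2⟩
    have hiS : i ∈ S := by
      simp only [hS, Finset.mem_filter, Finset.mem_univ, true_and]
      have hpos : 0 < xbar i := lt_of_lt_of_le (by linarith) hi1
      refine ⟨ne_of_gt hpos, ?_⟩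
      rw [abs_of_nonneg hpos.le]
      linarith
    have hc1 : (1 : ℝ) ≤ (S.card : ℝ) := by
      have : 0 < S.card := Finset.card_pos.mpr ⟨i, hiS⟩
      exact_mod_cast this
    rw [hsplit]
    push_cast
    nlinarith [mul_le_mul_of_nonneg_left hlt.le hcardnn, mul_lt_mul_of_pos_left hlt (lt_of_lt_of_le one_pos hc1)]
end

section
/- Let y* be a local minimizer of f(y) + λ‖y‖₀ over 𝒴 = {y ∈ ℝⁿ : −l ≤ y ≤ u}, and define x₊* = max(y*, 0) and x₋* = max(−y*, 0) (componentwise). Then (x₊*, x₋*) is a local minimizer of the function (x₊, x₋) ↦ f(x₊ − x₋) + λ‖x₊‖₀ + λ‖x₋‖₀ over X₁ × X₂, where X₁ = {x ∈ ℝⁿ : 0 ≤ x ≤ u} and X₂ = {x ∈ ℝⁿ : 0 ≤ x ≤ l}; moreover y* = x₊* − x₋*. -/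
open Filter Set
open scoped NNReal

open Classical in
lemma norm0_eq_card {n : ℕ} (x : EuclideanSpace ℝ (Fin n)) :
    norm0 x = (Finset.univ.filter (fun i => x i ≠ 0)).card := by
  rw [norm0, Nat.card_eq_fintype_card, Fintype.card_subtype]

lemma norm0_sub_le {n : ℕ} (a b : EuclideanSpace ℝ (Fin n)) :
    norm0 (a - b) ≤ norm0 a + norm0 b := by
  classical
  rw [norm0_eq_card, norm0_eq_card, norm0_eq_card]
  refine le_trans (Finset.card_le_card ?_) (Finset.card_union_le _ _)
  intro i hi
  simp only [Finset.mem_filter, Finset.mem_union, Finset.mem_univ, true_and] at hi ⊢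
  by_contra h
  push_neg at h
  apply hi
  show a i - b i = 0
  rw [h.1, h.2, sub_zero]

theorem stmt19 {n : ℕ} (l u : EuclideanSpace ℝ (Fin n))
    (hl : ∀ i, 0 ≤ l i) (hu : ∀ i, 0 ≤ u i)
    (lam : ℝ) (hlam : 0 < lam)
    (f : EuclideanSpace ℝ (Fin n) → ℝ) (hf : Continuous f)
    (ystar : EuclideanSpace ℝ (Fin n))
    (hys : ystar ∈ {y : EuclideanSpace ℝ (Fin n) | ∀ i, -l i ≤ y i ∧ y i ≤ u i})
    (hmin : IsLocalMinOn (fun y => f y + lam * (norm0 y : ℝ))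
      {y : EuclideanSpace ℝ (Fin n) | ∀ i, -l i ≤ y i ∧ y i ≤ u i} ystar)
    (xp xm : EuclideanSpace ℝ (Fin n))
    (hxp : ∀ i, xp i = max (ystar i) 0) (hxm : ∀ i, xm i = max (-ystar i) 0) :
    ystar = xp - xm ∧
    IsLocalMinOn
      (fun p : EuclideanSpace ℝ (Fin n) × EuclideanSpace ℝ (Fin n) =>
        f (p.1 - p.2) + lam * (norm0 p.1 : ℝ) + lam * (norm0 p.2 : ℝ))
      ({x : EuclideanSpace ℝ (Fin n) | ∀ i, 0 ≤ x i ∧ x i ≤ u i} ×ˢ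
        {x : EuclideanSpace ℝ (Fin n) | ∀ i, 0 ≤ x i ∧ x i ≤ l i})
      (xp, xm) := by
  classical
  have hdiff : ystar = xp - xm := by
    ext i
    show ystar i = xp i - xm i
    rw [hxp i, hxm i]
    rcases le_total 0 (ystar i) with h | h
    · rw [max_eq_left h, max_eq_right (by linarith), sub_zero]
    · rw [max_eq_right h, max_eq_left (by linarith)]; ring
  have hsplit : (norm0 ystar : ℝ) = norm0 xp + norm0 xm := by
    rw [norm0_eq_card, norm0_eq_card, norm0_eq_card]
    rw [← Nat.cast_add, Nat.cast_inj, ← Finset.card_union_of_disjoint]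
    · congr 1
      ext i
      simp only [Finset.mem_filter, Finset.mem_union, Finset.mem_univ, true_and,
        hxp i, hxm i]
      constructor
      · intro h
        rcases lt_trichotomy (ystar i) 0 with h1 | h1 | h1
        · exact Or.inr (by rw [max_eq_left (by linarith)]; linarith)
        · exact absurd h1 h
        · exact Or.inl (by rw [max_eq_left h1.le]; exact ne_of_gt h1)
      · intro h h0
        rcases h with h | h <;> simp [h0] at h
    · rw [Finset.disjoint_filter]
      intro i _ h1 h2
      rw [hxp i] at h1; rw [hxm i] at h2
      rcases le_total 0 (ystar i) with h | h
      · exact h2 (max_eq_right (by linarith))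
      · exact h1 (max_eq_right h)
  refine ⟨hdiff, ?_⟩
  have hxpmem : ∀ i, 0 ≤ xp i ∧ xp i ≤ u i := fun i => by
    rw [hxp i]; exact ⟨le_max_right _ _, max_le (hys i).2 (hu i)⟩
  have hxmmem : ∀ i, 0 ≤ xm i ∧ xm i ≤ l i := fun i => by
    rw [hxm i]; exact ⟨le_max_right _ _, max_le (by linarith [(hys i).1]) (hl i)⟩
  set Y := {y : EuclideanSpace ℝ (Fin n) | ∀ i, -l i ≤ y i ∧ y i ≤ u i}
  set S := ({x : EuclideanSpace ℝ (Fin n) | ∀ i, 0 ≤ x i ∧ x i ≤ u i} ×ˢ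
        {x : EuclideanSpace ℝ (Fin n) | ∀ i, 0 ≤ x i ∧ x i ≤ l i})
  have hmaps : MapsTo (fun p : EuclideanSpace ℝ (Fin n) × EuclideanSpace ℝ (Fin n)
      => p.1 - p.2) S Y := by
    rintro ⟨a, b⟩ ⟨ha, hb⟩ i
    have h1 := (ha i); have h2 := (hb i)
    constructor
    · show -l i ≤ a i - b i; linarith [h1.1, h2.2]
    · show a i - b i ≤ u i; linarith [h1.2, h2.1]
  have hT : Filter.Tendsto (fun p : EuclideanSpace ℝ (Fin n) × EuclideanSpace ℝ (Fin n)
      => p.1 - p.2) (nhdsWithin (xp, xm) S) (nhdsWithin ystar Y) := by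
    rw [hdiff]
    exact ((continuous_fst.sub continuous_snd).continuousWithinAt).tendsto_nhdsWithin hmaps
  have hev := hT.eventually hmin
  refine hev.mono ?_
  rintro ⟨a, b⟩ h
  simp only at h ⊢
  have hle : (norm0 (a - b) : ℝ) ≤ norm0 a + norm0 b := by
    exact_mod_cast norm0_sub_le a b
  have := mul_le_mul_of_nonneg_left hle hlam.le
  rw [← hdiff]
  rw [hsplit] at h
  nlinarith [h, this]
end
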